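/- arXiv:1709.05407 — 4 statements merged into one kernel-verified Lean document; each statement's English description precedes it below -/
import Mathlib

section
/- Let τ be a Hausdorff locally solid topology on a vector lattice X. The following are equivalent: (i) uτ is locally bounded; (ii) uτ has an order bounded neighbourhood of zero; (iii) τ has an order bounded neighbourhood of zero. Moreover, in this case τ = uτ. -/
open Filter Set Topology

variable {X : Type*} [Lattice X] [AddCommGroup X] [Module ℝ X]
  [CovariantClass X X (· + ·) (· ≤ ·)] [PosSMulMono ℝ X]

/-- The Archimedean property for a lattice-ordered group. -/
def VLArchimedean (X : Type*) [Lattice X] [AddCommGroup X] : Prop :=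
  ∀ x y : X, 0 ≤ x → (∀ n : ℕ, n • x ≤ y) → x = 0

/-- A set is solid if `x ∈ S` and `|y| ≤ |x|` imply `y ∈ S`. -/
def IsSolid (S : Set X) : Prop := ∀ ⦃x y : X⦄, x ∈ S → |y| ≤ |x| → y ∈ S

/-- A locally solid (linear) topology on a vector lattice. -/
def IsLocallySolidTop (τ : TopologicalSpace X) : Prop :=
  @IsTopologicalAddGroup X τ _ ∧ @ContinuousSMul ℝ X _ _ τ ∧
    ∀ U ∈ @nhds X τ 0, ∃ V ∈ @nhds X τ 0, IsSolid V ∧ V ⊆ U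

/-- An order ideal: a solid linear subspace. -/
def IsOrderIdeal (A : Set X) : Prop :=
  0 ∈ A ∧ (∀ x ∈ A, ∀ y ∈ A, x + y ∈ A) ∧ (∀ (c : ℝ), ∀ x ∈ A, c • x ∈ A) ∧ IsSolid A

/-- The order ideal generated by a set. -/
def idealGenerated (A : Set X) : Set X := ⋂₀ {I | IsOrderIdeal I ∧ A ⊆ I}

/-- A band: an order ideal closed under existing suprema. -/
def IsBand (B : Set X) : Prop :=
  IsOrderIdeal B ∧ ∀ D ⊆ B, ∀ x : X, IsLUB D x → x ∈ B

/-- The band generated by a set. -/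
def bandGenerated (A : Set X) : Set X := ⋂₀ {B | IsBand B ∧ A ⊆ B}

/-- `A` is a countable order basis: `A` is at most countable and generates `X` as a band. -/
def CountableOrderBasis (A : Set X) : Prop := A.Countable ∧ bandGenerated A = Set.univ

/-- The neighbourhood filter of zero of the unbounded topology `u_A τ`:
generated by the sets `{x : |x| ⊓ a ∈ U}` for `U` a `τ`-neighbourhood of zero, `a ∈ A₊`. -/
def unbNhdsZero (τ : TopologicalSpace X) (A : Set X) : Filter X :=
  ⨅ a ∈ {a ∈ A | 0 ≤ a}, Filter.comap (fun x => |x| ⊓ a) (@nhds X τ 0)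

/-- The unbounded topology `u_A τ` induced by the ideal `A`; `u τ = unbTopology τ Set.univ`. -/
def unbTopology (τ : TopologicalSpace X) (A : Set X) : TopologicalSpace X :=
  TopologicalSpace.mkOfNhds fun x => Filter.map (x + ·) (unbNhdsZero τ A)

/-- A sublattice/ideal is order dense if every nonzero positive vector dominates a
nonzero positive vector of it. -/
def OrderDense (A : Set X) : Prop := ∀ x : X, 0 < x → ∃ y ∈ A, 0 < y ∧ y ≤ x

/-- A minimal topology: a Hausdorff locally solid topology with no strictly coarser
Hausdorff locally solid topology. (In Mathlib's order on `TopologicalSpace`,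
`τ ≤ σ` means `τ` is finer than `σ`.) -/
def IsMinimalTop (τ : TopologicalSpace X) : Prop :=
  IsLocallySolidTop τ ∧ @T2Space X τ ∧
    ∀ σ : TopologicalSpace X, IsLocallySolidTop σ → @T2Space X σ → τ ≤ σ → σ = τ

/-- The countable sup property. -/
def CountableSupProperty (Y : Type*) [Lattice Y] : Prop :=
  ∀ S : Set Y, ∀ x : Y, S.Nonempty → IsLUB S x → ∃ C ⊆ S, C.Countable ∧ IsLUB C x

/-- Order convergence to zero of a net: there is a downward directed set `D` with
infimum `0`, each member of which eventually dominates `|x α|`. -/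
def OrderNull {ι : Type*} [Preorder ι] (x : ι → X) : Prop :=
  ∃ D : Set X, D.Nonempty ∧ (∀ a ∈ D, ∀ b ∈ D, ∃ c ∈ D, c ≤ a ∧ c ≤ b) ∧
    IsGLB D 0 ∧ ∀ d ∈ D, ∃ α₀ : ι, ∀ α, α₀ ≤ α → |x α| ≤ d

/-- Unbounded order (uo-) convergence to zero of a net. -/
def UoNull {ι : Type*} [Preorder ι] (x : ι → X) : Prop :=
  ∀ u : X, 0 ≤ u → OrderNull (fun α => |x α| ⊓ u)

/-- A set is topologically bounded if it is absorbed by every neighbourhood of zero. -/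
def TopBounded (τ : TopologicalSpace X) (S : Set X) : Prop :=
  ∀ U ∈ @nhds X τ 0, ∃ l : ℝ, 0 < l ∧ ∀ x ∈ S, l • x ∈ U

/-- A locally bounded topology: it has a topologically bounded neighbourhood of zero. -/
def LocallyBoundedTop (τ : TopologicalSpace X) : Prop :=
  ∃ V ∈ @nhds X τ 0, TopBounded τ V

/-- A submetrizable topology: finer than some metrizable linear topology.
(In Mathlib's order on `TopologicalSpace`, `τ ≤ σ` means `τ` is finer than `σ`.) -/
def Submetrizable (τ : TopologicalSpace X) : Prop :=
  ∃ σ : TopologicalSpace X, @IsTopologicalAddGroup X σ _ ∧ @ContinuousSMul ℝ X _ _ σ ∧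
    @TopologicalSpace.MetrizableSpace X σ ∧ τ ≤ σ

/-- A Riesz submetrizable topology: finer than some metrizable locally solid topology. -/
def RieszSubmetrizable (τ : TopologicalSpace X) : Prop :=
  ∃ σ : TopologicalSpace X, IsLocallySolidTop σ ∧ @TopologicalSpace.MetrizableSpace X σ ∧ τ ≤ σ

/-- Dedekind (order) completeness. -/
def DedekindComplete (Y : Type*) [Lattice Y] : Prop :=
  ∀ S : Set Y, S.Nonempty → BddAbove S → ∃ x, IsLUB S x

/-- Lateral completeness: every nonempty set of pairwise disjoint positive vectors
has a supremum. -/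
def LaterallyComplete (Y : Type*) [Lattice Y] [AddCommGroup Y] : Prop :=
  ∀ S : Set Y, S.Nonempty → (∀ x ∈ S, 0 ≤ x) → (S.Pairwise fun a b => a ⊓ b = 0) →
    ∃ x, IsLUB S x


set_option linter.unusedSectionVars false
set_option linter.unusedVariables false

namespace Stmt13Aux

/-! ### Order/algebra lemmas -/

lemma smul_nonneg' {c : ℝ} {x : X} (hc : 0 ≤ c) (hx : 0 ≤ x) : 0 ≤ c • x := by
  simpa using smul_le_smul_of_nonneg_left hx hc

lemma smul_mono_scalar {c d : ℝ} {x : X} (h : c ≤ d) (hx : 0 ≤ x) : c • x ≤ d • x := by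
  have h0 : 0 ≤ (d - c) • x := smul_nonneg' (by linarith) hx
  have := add_le_add_left h0 (c • x)
  rw [zero_add, ← add_smul] at this
  simpa [add_sub_cancel] using this

lemma smul_inf' {c : ℝ} (hc : 0 < c) (p q : X) : c • (p ⊓ q) = (c • p) ⊓ (c • q) := by
  refine le_antisymm (le_inf (smul_le_smul_of_nonneg_left inf_le_left hc.le)
    (smul_le_smul_of_nonneg_left inf_le_right hc.le)) ?_
  have h1 : c⁻¹ • ((c • p) ⊓ (c • q)) ≤ p := by
    have := smul_le_smul_of_nonneg_left (inf_le_left (a := c • p) (b := c • q))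
      (inv_nonneg.mpr hc.le)
    rwa [smul_smul, inv_mul_cancel₀ hc.ne', one_smul] at this
  have h2 : c⁻¹ • ((c • p) ⊓ (c • q)) ≤ q := by
    have := smul_le_smul_of_nonneg_left (inf_le_right (a := c • p) (b := c • q))
      (inv_nonneg.mpr hc.le)
    rwa [smul_smul, inv_mul_cancel₀ hc.ne', one_smul] at this
  have h3 := smul_le_smul_of_nonneg_left (le_inf h1 h2) hc.le
  rwa [smul_smul, mul_inv_cancel₀ hc.ne', one_smul] at h3

lemma smul_sup' {c : ℝ} (hc : 0 < c) (p q : X) : c • (p ⊔ q) = (c • p) ⊔ (c • q) := by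
  refine le_antisymm ?_ (sup_le (smul_le_smul_of_nonneg_left le_sup_left hc.le)
    (smul_le_smul_of_nonneg_left le_sup_right hc.le))
  have h1 : p ≤ c⁻¹ • ((c • p) ⊔ (c • q)) := by
    have := smul_le_smul_of_nonneg_left (le_sup_left (a := c • p) (b := c • q))
      (inv_nonneg.mpr hc.le)
    rwa [smul_smul, inv_mul_cancel₀ hc.ne', one_smul] at this
  have h2 : q ≤ c⁻¹ • ((c • p) ⊔ (c • q)) := by
    have := smul_le_smul_of_nonneg_left (le_sup_right (a := c • p) (b := c • q))
      (inv_nonneg.mpr hc.le)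
    rwa [smul_smul, inv_mul_cancel₀ hc.ne', one_smul] at this
  have h3 := smul_le_smul_of_nonneg_left (sup_le h1 h2) hc.le
  rwa [smul_smul, mul_inv_cancel₀ hc.ne', one_smul] at h3

lemma abs_smul' {c : ℝ} (hc : 0 ≤ c) (x : X) : |c • x| = c • |x| := by
  rcases eq_or_lt_of_le hc with h | h
  · simp [← h]
  · show (c • x) ⊔ -(c • x) = c • (x ⊔ -x)
    rw [smul_sup' h, smul_neg]

lemma inf_add_le' {a b c : X} (ha : 0 ≤ a) (hb : 0 ≤ b) (hc : 0 ≤ c) :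
    a ⊓ (b + c) ≤ a ⊓ b + a ⊓ c := by
  have h0 : a ⊓ (b + c) ≤ a ⊓ b + c := by
    have h1 : a ⊓ (b + c) ≤ (a + c) ⊓ (b + c) :=
      inf_le_inf_right _ (le_add_of_nonneg_right hc)
    rwa [← inf_add] at h1
  have h3 : a ⊓ (b + c) - a ⊓ b ≤ c := sub_le_iff_le_add.mpr (by simpa [add_comm] using h0)
  have h4 : a ⊓ (b + c) - a ⊓ b ≤ a :=
    le_trans (sub_le_self _ (le_inf ha hb)) inf_le_left
  have h5 : a ⊓ (b + c) - a ⊓ b ≤ a ⊓ c := le_inf h4 h3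
  have := add_le_add_right h5 (a ⊓ b)
  simpa [sub_add_cancel, add_comm] using this

/-- Key lemma: for `x, a ≥ 0` and `M ≥ 1`, `(M • (x - a)⁺) ⊓ a ≤ x ⊓ a`. -/
lemma lemE {x a : X} (hx : 0 ≤ x) (ha : 0 ≤ a) {M : ℝ} (hM : 1 ≤ M) :
    (M • (x - a)⁺) ⊓ a ≤ x ⊓ a := by
  set q : X := (x - a)⁺ with hqdef
  have hMpos : (0:ℝ) < M := lt_of_lt_of_le one_pos hM
  have hq : 0 ≤ q := posPart_nonneg _
  have hMq : 0 ≤ M • q := smul_nonneg' hMpos.le hq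
  have hm : (0:X) ≤ x ⊓ a := le_inf hx ha
  have hdecomp : a = x ⊓ a + (a - x)⁺ := by
    have h1 : a - x ⊓ a = (a - x) ⊔ (a - a) := sub_inf x a a
    have h2 : a - x ⊓ a = (a - x)⁺ := by rw [h1, sub_self, posPart_def]
    have h3 := eq_add_of_sub_eq h2
    exact h3.trans (add_comm _ _)
  calc (M • q) ⊓ a = (M • q) ⊓ (x ⊓ a + (a - x)⁺) := by rw [← hdecomp]
    _ ≤ (M • q) ⊓ (x ⊓ a) + (M • q) ⊓ (a - x)⁺ :=
        inf_add_le' hMq hm (posPart_nonneg _)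
    _ ≤ x ⊓ a + (M • q) ⊓ (M • (a - x)⁺) := by
        refine add_le_add inf_le_right (inf_le_inf_left _ ?_)
        have := smul_mono_scalar hM (posPart_nonneg (a - x))
        simpa using this
    _ = x ⊓ a + M • (q ⊓ (a - x)⁺) := by rw [smul_inf' hMpos]
    _ = x ⊓ a := by
        have hqn : q ⊓ (a - x)⁺ = 0 := by
          have hneg : (a - x)⁺ = (x - a)⁻ := by
            rw [negPart_def, posPart_def, neg_sub]
          rw [hqdef, hneg, posPart_inf_negPart_eq_zero]
        rw [hqn, smul_zero, add_zero]

/-! ### Topological lemmas -/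

variable {τ : TopologicalSpace X}

/-- basic unbounded-neighbourhood set -/
def Bset (a : X) (U : Set X) : Set X := {x : X | |x| ⊓ a ∈ U}

lemma Bset_mono {a : X} {U U' : Set X} (h : U ⊆ U') : Bset a U ⊆ Bset (X := X) a U' :=
  fun _ hx => h hx

lemma Bset_mem_unb {a : X} (ha : 0 ≤ a) {U : Set X} (hU : U ∈ @nhds X τ 0) :
    Bset a U ∈ unbNhdsZero τ Set.univ := by
  unfold unbNhdsZero
  exact mem_iInf_of_mem a (mem_iInf_of_mem ⟨trivial, ha⟩ (preimage_mem_comap hU))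

lemma solid_mem_Bset {a : X} (ha : 0 ≤ a) {U : Set X} (hUs : IsSolid U) {x : X}
    (hx : x ∈ U) : x ∈ Bset a U := by
  refine hUs hx ?_
  rw [abs_of_nonneg (le_inf (abs_nonneg x) ha)]
  exact inf_le_left

lemma unb_le_nhds (hτ : IsLocallySolidTop τ) :
    @nhds X τ 0 ≤ unbNhdsZero τ Set.univ := by
  unfold unbNhdsZero
  refine le_iInf fun a => le_iInf fun haS => ?_
  rw [← Filter.map_le_iff_le_comap]
  intro U hU
  rcases hτ.2.2 U hU with ⟨V, hV, hVs, hVU⟩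
  rw [Filter.mem_map]
  refine Filter.mem_of_superset hV fun x hx => ?_
  refine hVU (hVs hx ?_)
  rw [abs_of_nonneg (le_inf (abs_nonneg x) haS.2)]
  exact inf_le_left

lemma zero_mem_unb (hτ : IsLocallySolidTop τ) {s : Set X}
    (hs : s ∈ unbNhdsZero τ Set.univ) : (0 : X) ∈ s := by
  letI := τ
  exact mem_of_mem_nhds (unb_le_nhds hτ hs)

lemma unb_mem_iff (hτ : IsLocallySolidTop τ) {s : Set X} :
    s ∈ unbNhdsZero τ Set.univ ↔
      ∃ a : X, 0 ≤ a ∧ ∃ U ∈ @nhds X τ 0, Bset a U ⊆ s := by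
  unfold unbNhdsZero
  have hdir : DirectedOn ((fun a : X => Filter.comap (fun x => |x| ⊓ a) (@nhds X τ 0))
      ⁻¹'o (· ≥ ·)) {a : X | a ∈ Set.univ ∧ 0 ≤ a} := by
    intro a ha b hb
    refine ⟨a ⊔ b, ⟨trivial, le_trans ha.2 le_sup_left⟩, ?_, ?_⟩
    · intro t ht
      rcases Filter.mem_comap.mp ht with ⟨U, hU, hsub⟩
      rcases hτ.2.2 U hU with ⟨V, hV, hVs, hVU⟩
      refine Filter.mem_comap.mpr ⟨V, hV, fun x hx => ?_⟩
      refine hsub (show |x| ⊓ a ∈ U from hVU (hVs hx ?_))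
      rw [abs_of_nonneg (le_inf (abs_nonneg x) ha.2),
        abs_of_nonneg (le_inf (abs_nonneg x) (le_trans ha.2 le_sup_left))]
      exact inf_le_inf_left _ le_sup_left
    · intro t ht
      rcases Filter.mem_comap.mp ht with ⟨U, hU, hsub⟩
      rcases hτ.2.2 U hU with ⟨V, hV, hVs, hVU⟩
      refine Filter.mem_comap.mpr ⟨V, hV, fun x hx => ?_⟩
      refine hsub (show |x| ⊓ b ∈ U from hVU (hVs hx ?_))
      rw [abs_of_nonneg (le_inf (abs_nonneg x) hb.2),
        abs_of_nonneg (le_inf (abs_nonneg x) (le_trans ha.2 le_sup_left))]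
      exact inf_le_inf_left _ le_sup_right
  have hne : ({a : X | a ∈ Set.univ ∧ 0 ≤ a}).Nonempty := ⟨0, trivial, le_refl 0⟩
  rw [Filter.mem_biInf_of_directed hdir hne]
  constructor
  · rintro ⟨a, ha, hmem⟩
    rcases Filter.mem_comap.mp hmem with ⟨U, hU, hsub⟩
    exact ⟨a, ha.2, U, hU, hsub⟩
  · rintro ⟨a, ha, U, hU, hsub⟩
    exact ⟨a, ⟨trivial, ha⟩, Filter.mem_comap.mpr ⟨U, hU, hsub⟩⟩

lemma Bset_add {a : X} (ha : 0 ≤ a) {U' U₂ : Set X} (hU₂s : IsSolid U₂)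
    (hhalf : ∀ v ∈ U', ∀ w ∈ U', v + w ∈ U₂) :
    ∀ v ∈ Bset (X := X) a U', ∀ w ∈ Bset (X := X) a U', v + w ∈ Bset a U₂ := by
  intro v hv w hw
  have hp : |v| ⊓ a ∈ U' := hv
  have hq : |w| ⊓ a ∈ U' := hw
  have hpq : |v| ⊓ a + |w| ⊓ a ∈ U₂ := hhalf _ hp _ hq
  refine hU₂s hpq ?_
  have h1 : (0:X) ≤ |v + w| ⊓ a := le_inf (abs_nonneg _) ha
  have h2 : (0:X) ≤ |v| ⊓ a + |w| ⊓ a :=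
    add_nonneg (le_inf (abs_nonneg _) ha) (le_inf (abs_nonneg _) ha)
  rw [abs_of_nonneg h1, abs_of_nonneg h2]
  calc |v + w| ⊓ a ≤ (|v| + |w|) ⊓ a := inf_le_inf_right _ (abs_add_le v w)
    _ = a ⊓ (|v| + |w|) := inf_comm _ _
    _ ≤ a ⊓ |v| + a ⊓ |w| := inf_add_le' ha (abs_nonneg _) (abs_nonneg _)
    _ = |v| ⊓ a + |w| ⊓ a := by rw [inf_comm a (|v|), inf_comm a (|w|)]

lemma nhds_unb (hτ : IsLocallySolidTop τ) (x : X) :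
    @nhds X (unbTopology τ Set.univ) x = Filter.map (x + ·) (unbNhdsZero τ Set.univ) := by
  refine TopologicalSpace.nhds_mkOfNhds _ x ?_ ?_
  · intro y s hs
    rw [Filter.mem_map] at hs
    have h0 : (0 : X) ∈ (y + ·) ⁻¹' s := zero_mem_unb hτ hs
    simpa using h0
  · intro y s hs
    rw [Filter.mem_map] at hs
    rcases (unb_mem_iff hτ).mp hs with ⟨a, ha, U, hU, hBU⟩
    rcases hτ.2.2 U hU with ⟨U₂, hU₂, hU₂s, hU₂U⟩
    haveI := hτ.1
    rcases @exists_nhds_zero_half X τ _ _ U₂ hU₂ with ⟨V₁, hV₁, hV₁half⟩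
    rcases hτ.2.2 V₁ hV₁ with ⟨U', hU', hU's, hU'V₁⟩
    have hhalf : ∀ v ∈ U', ∀ w ∈ U', v + w ∈ U₂ := fun v hv w hw =>
      hV₁half v (hU'V₁ hv) w (hU'V₁ hw)
    have hBmem : Bset a U' ∈ unbNhdsZero τ Set.univ := Bset_mem_unb ha hU'
    rw [Filter.eventually_iff, Filter.mem_map]
    refine Filter.mem_of_superset hBmem fun w hw => ?_
    show s ∈ Filter.map ((y + w) + ·) (unbNhdsZero τ Set.univ)
    rw [Filter.mem_map]
    refine Filter.mem_of_superset hBmem fun w' hw' => ?_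
    show y + w + w' ∈ s
    have h1 : w + w' ∈ Bset a U₂ := Bset_add ha hU₂s hhalf w hw w' hw'
    have h2 : w + w' ∈ Bset a U := Bset_mono hU₂U h1
    have : y + (w + w') ∈ s := hBU h2
    simpa [add_assoc] using this

lemma nhds_unb_zero (hτ : IsLocallySolidTop τ) :
    @nhds X (unbTopology τ Set.univ) 0 = unbNhdsZero τ Set.univ := by
  rw [nhds_unb hτ 0]
  have h : (fun y : X => (0:X) + y) = id := funext fun y => zero_add y
  rw [h, Filter.map_id]

lemma absorb (hτ : IsLocallySolidTop τ) (x : X) {U : Set X} (hU : U ∈ @nhds X τ 0) :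
    ∃ l : ℝ, 0 < l ∧ l • x ∈ U := by
  letI := τ
  haveI := hτ.2.1
  have hc : Continuous fun r : ℝ => r • x := continuous_id.smul continuous_const
  have ht : Filter.Tendsto (fun r : ℝ => r • x) (nhds 0) (nhds (0 : X)) := by
    have := hc.tendsto 0
    simpa using this
  have hpre : (fun r : ℝ => r • x) ⁻¹' U ∈ nhds (0 : ℝ) := ht hU
  rcases Metric.mem_nhds_iff.mp hpre with ⟨ε, hε, hball⟩
  refine ⟨ε / 2, by positivity, ?_⟩
  have hmem : (ε / 2 : ℝ) ∈ Metric.ball (0:ℝ) ε := by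
    rw [Metric.mem_ball, Real.dist_eq, sub_zero, abs_of_pos (by positivity : (0:ℝ) < ε / 2)]
    linarith
  exact hball hmem

lemma strongUnit (hτ : IsLocallySolidTop τ) {V : Set X} {u : X} (hu : 0 ≤ u)
    (hV : V ∈ @nhds X τ 0) (hVu : V ⊆ Set.Icc (-u) u) (x : X) :
    ∃ r : ℝ, 1 ≤ r ∧ |x| ≤ r • u := by
  obtain ⟨l, hl, hlx⟩ := absorb hτ x hV
  have h1 : |l • x| ≤ u := by
    have hx := hVu hlx
    exact abs_le'.mpr ⟨hx.2, neg_le.mp hx.1⟩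
  have h2 : l • |x| ≤ u := by rw [← abs_smul' hl.le]; exact h1
  refine ⟨max l⁻¹ 1, le_max_right _ _, ?_⟩
  have h3 : |x| = l⁻¹ • (l • |x|) := by
    rw [smul_smul, inv_mul_cancel₀ hl.ne', one_smul]
  rw [h3]
  calc l⁻¹ • (l • |x|) ≤ l⁻¹ • u := smul_le_smul_of_nonneg_left h2 (inv_nonneg.mpr hl.le)
    _ ≤ (max l⁻¹ 1) • u := smul_mono_scalar (le_max_left _ _) hu

end Stmt13Aux

namespace Stmt13Aux

variable {τ : TopologicalSpace X}

/-- (i) ⇒ (ii): a bounded `uτ`-neighbourhood yields an order bounded one. -/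
lemma lemAB (hτ : IsLocallySolidTop τ) (hT2 : @T2Space X τ)
    (hA : LocallyBoundedTop (unbTopology τ Set.univ)) :
    ∃ V ∈ @nhds X (unbTopology τ Set.univ) 0, ∃ u : X, 0 ≤ u ∧ V ⊆ Set.Icc (-u) u := by
  obtain ⟨V₀, hV₀, hbd⟩ := hA
  rw [nhds_unb_zero hτ] at hV₀
  obtain ⟨a, ha, U, hU, hBU⟩ := (unb_mem_iff hτ).mp hV₀
  obtain ⟨U₀, hU₀, hU₀s, hU₀U⟩ := hτ.2.2 U hU
  set W : Set X := Bset a U₀ with hWdef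
  have hWV₀ : W ⊆ V₀ := fun x hx => hBU (Bset_mono hU₀U hx)
  refine ⟨W, by rw [nhds_unb_zero hτ]; exact Bset_mem_unb ha hU₀, a, ha, ?_⟩
  intro x hx
  set q : X := (|x| - a)⁺ with hqdef
  have hq0 : 0 ≤ q := posPart_nonneg _
  have hqzero : q = 0 := by
    by_contra hqne
    letI := τ
    haveI := hT2
    have hUq : {q}ᶜ ∈ @nhds X τ 0 :=
      compl_singleton_mem_nhds (fun h => hqne h.symm)
    obtain ⟨U₁, hU₁, hU₁s, hU₁sub⟩ := hτ.2.2 _ hUq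
    have hNq : Bset q U₁ ∈ @nhds X (unbTopology τ Set.univ) 0 := by
      rw [nhds_unb_zero hτ]; exact Bset_mem_unb hq0 hU₁
    obtain ⟨l, hl, hlmem⟩ := hbd _ hNq
    set M : ℝ := max l⁻¹ 1 with hMdef
    have hM1 : (1:ℝ) ≤ M := le_max_right _ _
    have hMq0 : 0 ≤ M • q := smul_nonneg' (by linarith) hq0
    have hMqW : M • q ∈ W := by
      show |M • q| ⊓ a ∈ U₀
      have habs : |M • q| = M • q := abs_of_nonneg hMq0
      rw [habs]
      have hle : (M • q) ⊓ a ≤ |x| ⊓ a := lemE (abs_nonneg x) ha hM1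
      refine hU₀s hx ?_
      rw [abs_of_nonneg (le_inf hMq0 ha), abs_of_nonneg (le_inf (abs_nonneg x) ha)]
      exact hle
    have hmem := hlmem _ (hWV₀ hMqW)
    have hlM1 : (1:ℝ) ≤ l * M := by
      have h1 : l * l⁻¹ ≤ l * M := mul_le_mul_of_nonneg_left (le_max_left _ _) hl.le
      rwa [mul_inv_cancel₀ hl.ne'] at h1
    have hqmem : q ∈ U₁ := by
      have h2 : l • (M • q) = (l * M) • q := smul_smul l M q
      have h3 : q ≤ (l * M) • q := by
        have := smul_mono_scalar hlM1 hq0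
        simpa using this
      have h4 : 0 ≤ (l * M) • q := le_trans hq0 h3
      have h5 : |l • (M • q)| ⊓ q = q := by
        rw [h2, abs_of_nonneg h4, inf_eq_right.mpr h3]
      have : |l • (M • q)| ⊓ q ∈ U₁ := hmem
      rwa [h5] at this
    exact (hU₁sub hqmem) rfl
  have hxa : |x| ≤ a := sub_nonpos.mp (posPart_eq_zero.mp hqzero)
  exact ⟨neg_le.mpr (le_trans (neg_le_abs x) hxa), le_trans (le_abs_self x) hxa⟩

/-- (ii) ⇒ (iii). -/
lemma lemBC (hτ : IsLocallySolidTop τ)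
    (hB : ∃ V ∈ @nhds X (unbTopology τ Set.univ) 0, ∃ u : X, 0 ≤ u ∧ V ⊆ Set.Icc (-u) u) :
    ∃ V ∈ @nhds X τ 0, ∃ u : X, 0 ≤ u ∧ V ⊆ Set.Icc (-u) u := by
  obtain ⟨V, hV, u, hu, hVu⟩ := hB
  rw [nhds_unb_zero hτ] at hV
  exact ⟨V, unb_le_nhds hτ hV, u, hu, hVu⟩

/-- (iii) implies the neighbourhood filters of zero agree. -/
lemma nhds_eq_of_C (hτ : IsLocallySolidTop τ)
    (hC : ∃ V ∈ @nhds X τ 0, ∃ u : X, 0 ≤ u ∧ V ⊆ Set.Icc (-u) u) :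
    unbNhdsZero τ Set.univ = @nhds X τ 0 := by
  obtain ⟨V, hV, u, hu, hVu⟩ := hC
  refine le_antisymm ?_ (unb_le_nhds hτ)
  intro U hU
  obtain ⟨U', hU', hU's, hU'U⟩ := hτ.2.2 U hU
  obtain ⟨V', hV', hV's, hV'V⟩ := hτ.2.2 V hV
  letI := τ
  haveI := hτ.2.1
  set u' : X := (2:ℝ)⁻¹ • u with hu'def
  have hu'0 : 0 ≤ u' := smul_nonneg' (by norm_num) hu
  have hu'u : u' ≤ u := by
    have := smul_mono_scalar (by norm_num : (2:ℝ)⁻¹ ≤ 1) hu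
    simpa using this
  have hsum : u' + u' = u := by
    rw [hu'def, ← add_smul]
    norm_num
  have hcont : Filter.Tendsto (fun y : X => (2:ℝ) • y) (nhds 0) (nhds (0:X)) := by
    have hc : Continuous fun y : X => (2:ℝ) • y := continuous_const.smul continuous_id
    have := hc.tendsto 0
    simpa using this
  have hW₁ : U' ∩ (fun y : X => (2:ℝ) • y) ⁻¹' V' ∈ @nhds X τ 0 :=
    Filter.inter_mem hU' (hcont hV')
  obtain ⟨W₂, hW₂, hW₂s, hW₂sub⟩ := hτ.2.2 _ hW₁
  refine Filter.mem_of_superset (Bset_mem_unb hu hW₂) ?_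
  intro x hx
  have hs : |x| ⊓ u ∈ W₂ := hx
  have hs1 : |x| ⊓ u ∈ U' := (hW₂sub hs).1
  have hs2 : (2:ℝ) • (|x| ⊓ u) ∈ V' := (hW₂sub hs).2
  have hsle : |x| ⊓ u ≤ u' := by
    have h2s : (2:ℝ) • (|x| ⊓ u) ≤ u := (hVu (hV'V hs2)).2
    have := smul_le_smul_of_nonneg_left h2s (by norm_num : (0:ℝ) ≤ 2⁻¹)
    rwa [smul_smul, inv_mul_cancel₀ (by norm_num : (2:ℝ) ≠ 0), one_smul] at this
  set y : X := (|x| - u')⁺ with hydef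
  have hy0 : 0 ≤ y := posPart_nonneg _
  have hyu' : y ⊓ u' = 0 := by
    letI := AddCommGroup.toDistribLattice X
    have e1 : y ⊓ u' = ((|x| - u') ⊓ u') ⊔ (0 ⊓ u') := by
      rw [hydef, posPart_def, inf_sup_right]
    have e2 : (0:X) ⊓ u' = 0 := inf_eq_left.mpr hu'0
    have e3 : u - u' = u' := by rw [← hsum]; abel
    have e4 : (|x| - u') ⊓ u' = |x| ⊓ u - u' := by
      have h := inf_sub (|x|) u u'
      rw [e3] at h
      exact h.symm
    have e5 : (|x| ⊓ u - u') ⊔ 0 = (|x| ⊓ u - u')⁺ := (posPart_def _).symm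
    rw [e1, e2, e4, e5]
    exact posPart_eq_zero.mpr (sub_nonpos.mpr hsle)
  have hyu : y ⊓ u = 0 := by
    have h1 : y ⊓ u ≤ y ⊓ u' + y ⊓ u' := by
      rw [← hsum]
      exact inf_add_le' hy0 hu'0 hu'0
    rw [hyu'] at h1
    simp only [add_zero] at h1
    exact le_antisymm h1 (le_inf hy0 (le_trans hu'0 hu'u))
  have hyzero : y = 0 := by
    obtain ⟨r, hr1, hrx⟩ := strongUnit hτ hu hV hVu x
    have hyx : y ≤ |x| := by
      rw [hydef, posPart_def]
      exact sup_le (sub_le_self _ hu'0) (abs_nonneg x)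
    have hyru : y ≤ r • u := le_trans hyx hrx
    have h6 : y ≤ r • y := by
      have := smul_mono_scalar hr1 hy0
      simpa using this
    have h7 : y = y ⊓ (r • u) := (inf_eq_left.mpr hyru).symm
    have h8 : y ⊓ (r • u) ≤ (r • y) ⊓ (r • u) := inf_le_inf_right _ h6
    have h9 : (r • y) ⊓ (r • u) = r • (y ⊓ u) := (smul_inf' (by linarith) y u).symm
    have : y ≤ 0 := by
      rw [h7]
      calc y ⊓ (r • u) ≤ (r • y) ⊓ (r • u) := h8
        _ = r • (y ⊓ u) := h9
        _ = 0 := by rw [hyu, smul_zero]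
    exact le_antisymm this hy0
  have hxu' : |x| ≤ u' := sub_nonpos.mp (posPart_eq_zero.mp hyzero)
  have hsx : |x| ⊓ u = |x| := inf_eq_left.mpr (le_trans hxu' hu'u)
  have : |x| ∈ U' := by rw [← hsx]; exact hs1
  refine hU'U (hU's this ?_)
  rw [abs_of_nonneg (abs_nonneg x)]

/-- (iii) ⇒ `τ = uτ`. -/
lemma topo_eq_of_C (hτ : IsLocallySolidTop τ)
    (hC : ∃ V ∈ @nhds X τ 0, ∃ u : X, 0 ≤ u ∧ V ⊆ Set.Icc (-u) u) :
    τ = unbTopology τ Set.univ := by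
  refine TopologicalSpace.ext_nhds fun x => ?_
  rw [nhds_unb hτ x, nhds_eq_of_C hτ hC]
  letI := τ
  haveI := hτ.1
  exact (map_add_left_nhds_zero x).symm

/-- (ii) ⇒ (i). -/
lemma lemBA (hτ : IsLocallySolidTop τ)
    (hB : ∃ V ∈ @nhds X (unbTopology τ Set.univ) 0, ∃ u : X, 0 ≤ u ∧ V ⊆ Set.Icc (-u) u) :
    LocallyBoundedTop (unbTopology τ Set.univ) := by
  have hC := lemBC hτ hB
  have hnhds := nhds_eq_of_C hτ hC
  obtain ⟨V, hV, u, hu, hVu⟩ := hB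
  refine ⟨V, hV, ?_⟩
  intro U hU
  rw [nhds_unb_zero hτ, hnhds] at hU
  obtain ⟨U', hU', hU's, hU'U⟩ := hτ.2.2 U hU
  obtain ⟨l, hl, hlu⟩ := absorb hτ u hU'
  refine ⟨l, hl, fun x hx => ?_⟩
  have hxu : |x| ≤ u := abs_le'.mpr ⟨(hVu hx).2, neg_le.mp (hVu hx).1⟩
  refine hU'U (hU's hlu ?_)
  rw [abs_smul' hl.le, abs_of_nonneg (smul_nonneg' hl.le hu)]
  exact smul_le_smul_of_nonneg_left hxu hl.le

end Stmt13Aux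

/-- TFAE: (i) `u τ` is locally bounded; (ii) `u τ` has an order bounded
neighbourhood of zero; (iii) `τ` has an order bounded neighbourhood of zero; moreover,
in this case `τ = u τ`. -/
theorem stmt13 (hArch : VLArchimedean X) (τ : TopologicalSpace X)
    (hτ : IsLocallySolidTop τ) (hT2 : @T2Space X τ) :
    ((LocallyBoundedTop (unbTopology τ Set.univ) ↔
        ∃ V ∈ @nhds X (unbTopology τ Set.univ) 0, ∃ u : X, 0 ≤ u ∧ V ⊆ Set.Icc (-u) u) ∧
      ((∃ V ∈ @nhds X (unbTopology τ Set.univ) 0, ∃ u : X, 0 ≤ u ∧ V ⊆ Set.Icc (-u) u) ↔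
        ∃ V ∈ @nhds X τ 0, ∃ u : X, 0 ≤ u ∧ V ⊆ Set.Icc (-u) u)) ∧
    (LocallyBoundedTop (unbTopology τ Set.univ) → τ = unbTopology τ Set.univ) := by
  have hCB : (∃ V ∈ @nhds X τ 0, ∃ u : X, 0 ≤ u ∧ V ⊆ Set.Icc (-u) u) →
      ∃ V ∈ @nhds X (unbTopology τ Set.univ) 0, ∃ u : X, 0 ≤ u ∧ V ⊆ Set.Icc (-u) u := by
    intro hC
    obtain ⟨V, hV, u, hu, hVu⟩ := id hC
    refine ⟨V, ?_, u, hu, hVu⟩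
    rw [Stmt13Aux.nhds_unb_zero hτ, Stmt13Aux.nhds_eq_of_C hτ hC]
    exact hV
  refine ⟨⟨⟨Stmt13Aux.lemAB hτ hT2, Stmt13Aux.lemBA hτ⟩,
    ⟨Stmt13Aux.lemBC hτ, hCB⟩⟩, fun hA => ?_⟩
  exact Stmt13Aux.topo_eq_of_C hτ (Stmt13Aux.lemBC hτ (Stmt13Aux.lemAB hτ hT2 hA))
end

section
/- Let A be an order dense ideal of a Hausdorff locally solid vector lattice (X,τ). If u_Aτ is locally bounded, then A = X. -/
open Filter Set Topology

variable {X : Type*} [Lattice X] [AddCommGroup X] [Module ℝ X]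
  [CovariantClass X X (· + ·) (· ≤ ·)] [PosSMulMono ℝ X]

/-- subadditivity of `· ⊓ b` on nonnegatives -/
lemma my_inf_add_le {u v b : X} (hu : 0 ≤ u) (hv : 0 ≤ v) (hb : 0 ≤ b) :
    (u + v) ⊓ b ≤ u ⊓ b + v ⊓ b := by
  have h1 : u ⊓ b + v ⊓ b = ((u + v) ⊓ (u + b)) ⊓ ((b + v) ⊓ (b + b)) := by
    rw [inf_add u b (v ⊓ b), add_inf v b u, add_inf v b b]
  rw [h1]
  exact le_inf (le_inf inf_le_left (inf_le_right.trans (le_add_of_nonneg_left hu)))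
    (le_inf (inf_le_right.trans (le_add_of_nonneg_right hv))
      (inf_le_right.trans (le_add_of_nonneg_left hb)))

lemma my_abs_inf_add {x y b : X} (hb : 0 ≤ b) :
    |x + y| ⊓ b ≤ |x| ⊓ b + |y| ⊓ b :=
  (inf_le_inf_right b (abs_add_le x y)).trans
    (my_inf_add_le (abs_nonneg x) (abs_nonneg y) hb)

lemma my_disjoint_nsmul {p q : X} (hp : 0 ≤ p) (hq : 0 ≤ q) (h : p ⊓ q = 0) (n : ℕ) :
    (n • p) ⊓ q = 0 := by
  induction n with
  | zero => simpa using inf_eq_left.mpr hq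
  | succ n ih =>
    have hle : ((n + 1) • p) ⊓ q ≤ (n • p) ⊓ q + p ⊓ q := by
      have h1 : (n + 1) • p = n • p + p := succ_nsmul p n
      rw [h1]
      have := my_inf_add_le (nsmul_nonneg hp n) hp hq
      exact this
    have hge : 0 ≤ ((n + 1) • p) ⊓ q := le_inf (nsmul_nonneg hp (n + 1)) hq
    have : ((n + 1) • p) ⊓ q ≤ 0 := by rw [ih, h, add_zero] at hle; exact hle
    exact le_antisymm this hge

lemma my_disjoint_smul {p q : X} (hp : 0 ≤ p) (hq : 0 ≤ q) (h : p ⊓ q = 0)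
    {c : ℝ} (hc : 0 ≤ c) : (c • p) ⊓ q = 0 := by
  have h1 : c • p ≤ (⌈c⌉₊ : ℝ) • p := by
    have h2 : 0 ≤ ((⌈c⌉₊ : ℝ) - c) • p := smul_nonneg (by linarith [Nat.le_ceil c]) hp
    have h3 : ((⌈c⌉₊ : ℝ) - c) • p = (⌈c⌉₊ : ℝ) • p - c • p := sub_smul _ _ _
    exact sub_nonneg.mp (h3 ▸ h2)
  have h4 : ((⌈c⌉₊ : ℝ) • p) ⊓ q = 0 := by
    rw [Nat.cast_smul_eq_nsmul]; exact my_disjoint_nsmul hp hq h ⌈c⌉₊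
  have h5 : (c • p) ⊓ q ≤ ((⌈c⌉₊ : ℝ) • p) ⊓ q := inf_le_inf_right q h1
  exact le_antisymm (h4 ▸ h5) (le_inf (smul_nonneg hc hp) hq)

/-- key: `(c • (x - b)⁺) ⊓ b ≤ x` for `x ≥ 0`. -/
lemma my_claimC {x b : X} (hx : 0 ≤ x) {c : ℝ} (hc : 0 ≤ c) :
    (c • (x - b)⁺) ⊓ b ≤ x := by
  set p := (x - b)⁺ with hpdef
  set q := (x - b)⁻ with hqdef
  have hpq : p ⊓ q = 0 := posPart_inf_negPart_eq_zero (x - b)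
  have hdisj : (c • p) ⊓ q = 0 :=
    my_disjoint_smul (posPart_nonneg _) (negPart_nonneg _) hpq hc
  have key : (c • p) ⊓ b - x ≤ (c • p) ⊓ q := by
    have h1 : (c • p) ⊓ b - x = (c • p - x) ⊓ (b - x) := by
      rw [sub_eq_add_neg, inf_add (c • p) b (-x), ← sub_eq_add_neg, ← sub_eq_add_neg]
    rw [h1]
    refine inf_le_inf (sub_le_self _ hx) ?_
    have : b - x ≤ (b - x) ⊔ 0 := le_sup_left
    calc b - x ≤ (-(x - b)) ⊔ 0 := by rw [neg_sub]; exact le_sup_left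
      _ = q := by rw [hqdef, negPart_def]
  rw [hdisj] at key
  exact sub_nonpos.mp key

/-- key inequality, uniform in `c`. -/
lemma my_keyK {x a : X} (hx : 0 ≤ x) (ha : 0 ≤ a) {n : ℕ} (hn : 1 ≤ n)
    {c : ℝ} (hc : 0 ≤ c) :
    (c • (x - (n : ℝ) • a)⁺) ⊓ a ≤ ((n : ℝ))⁻¹ • x := by
  set z := (x - (n : ℝ) • a)⁺ with hz
  set w := (c • z) ⊓ a with hw
  have hnR : (0 : ℝ) < (n : ℝ) := by exact_mod_cast Nat.pos_of_ne_zero (by omega)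
  have hw0 : 0 ≤ w := le_inf (smul_nonneg hc (posPart_nonneg _)) ha
  have h1 : (n : ℝ) • w ≤ ((n : ℝ) • (c • z)) ⊓ ((n : ℝ) • a) :=
    le_inf (smul_le_smul_of_nonneg_left inf_le_left hnR.le)
      (smul_le_smul_of_nonneg_left inf_le_right hnR.le)
  have h2 : ((n : ℝ) • (c • z)) ⊓ ((n : ℝ) • a) ≤ x := by
    rw [smul_smul]
    exact my_claimC hx (by positivity)
  have h3 : (n : ℝ) • w ≤ x := h1.trans h2
  calc w = ((n : ℝ))⁻¹ • ((n : ℝ) • w) := (inv_smul_smul₀ hnR.ne' w).symm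
    _ ≤ ((n : ℝ))⁻¹ • x := smul_le_smul_of_nonneg_left h3 (by positivity)

/-- Riesz-type decomposition membership. -/
lemma my_decomp {z u : X} : z ⊓ u + (z - u)⁺ = z := by
  have h1 : (z - u)⁺ = (z ⊔ u) - u := by
    rw [posPart_def, sub_eq_add_neg (z ⊔ u) u, sup_add z u (-u), ← sub_eq_add_neg,
      add_neg_cancel]
  rw [h1, ← add_sub_assoc, inf_add_sup, add_sub_cancel_right]


lemma my_G_mono (τ : TopologicalSpace X) (hτ : IsLocallySolidTop τ) {a b : X}
    (ha : 0 ≤ a) (hab : a ≤ b) :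
    Filter.comap (fun x => |x| ⊓ b) (@nhds X τ 0) ≤
      Filter.comap (fun x => |x| ⊓ a) (@nhds X τ 0) := by
  intro s hs
  obtain ⟨W, hW, hWs⟩ := Filter.mem_comap.mp hs
  obtain ⟨W₂, hW₂, hW₂solid, hW₂W⟩ := hτ.2.2 W hW
  refine Filter.mem_comap.mpr ⟨W₂, hW₂, fun x hx => hWs ?_⟩
  refine hW₂W (hW₂solid hx ?_)
  rw [abs_of_nonneg (le_inf (abs_nonneg x) ha), abs_of_nonneg (le_inf (abs_nonneg x) (ha.trans hab))]
  exact inf_le_inf_left _ hab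

lemma my_mem_F (τ : TopologicalSpace X) (hτ : IsLocallySolidTop τ) {A : Set X}
    (hA : IsOrderIdeal A) {s : Set X} :
    s ∈ unbNhdsZero τ A ↔
      ∃ a, (a ∈ A ∧ 0 ≤ a) ∧ ∃ W ∈ @nhds X τ 0, (fun x => |x| ⊓ a) ⁻¹' W ⊆ s := by
  have hdir : DirectedOn
      ((fun a => Filter.comap (fun x => |x| ⊓ a) (@nhds X τ 0)) ⁻¹'o (· ≥ ·))
      {a | a ∈ A ∧ 0 ≤ a} := by
    rintro a ⟨haA, ha0⟩ b ⟨hbA, hb0⟩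
    have habA : a ⊔ b ∈ A := by
      refine hA.2.2.2 (hA.2.1 a haA b hbA) ?_
      rw [abs_of_nonneg (ha0.trans le_sup_left),
        abs_of_nonneg (add_nonneg ha0 hb0)]
      exact sup_le (le_add_of_nonneg_right hb0) (le_add_of_nonneg_left ha0)
    exact ⟨a ⊔ b, ⟨habA, ha0.trans le_sup_left⟩,
      my_G_mono τ hτ ha0 le_sup_left, my_G_mono τ hτ hb0 le_sup_right⟩
  have hne : {a : X | a ∈ A ∧ 0 ≤ a}.Nonempty := ⟨0, hA.1, le_refl 0⟩
  constructor
  · intro hs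
    obtain ⟨a, ha, hsa⟩ := (Filter.mem_biInf_of_directed hdir hne).mp hs
    obtain ⟨W, hW, hWs⟩ := Filter.mem_comap.mp hsa
    exact ⟨a, ha, W, hW, hWs⟩
  · rintro ⟨a, ha, W, hW, hWs⟩
    exact (Filter.mem_biInf_of_directed hdir hne).mpr
      ⟨a, ha, Filter.mem_comap.mpr ⟨W, hW, hWs⟩⟩

lemma my_unb_nhds (τ : TopologicalSpace X) (hτ : IsLocallySolidTop τ) {A : Set X}
    (hA : IsOrderIdeal A) :
    @nhds X (unbTopology τ A) 0 = unbNhdsZero τ A := by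
  letI := τ
  haveI : IsTopologicalAddGroup X := hτ.1
  have hpure0 : (pure 0 : Filter X) ≤ unbNhdsZero τ A := by
    refine le_iInf₂ fun a ha => ?_
    intro s hs
    obtain ⟨W, hW, hWs⟩ := Filter.mem_comap.mp hs
    refine Filter.mem_pure.mpr (hWs ?_)
    show |(0 : X)| ⊓ a ∈ W
    rw [abs_zero, inf_eq_left.mpr ha.2]
    exact mem_of_mem_nhds hW
  have key : ∀ s ∈ unbNhdsZero τ A, ∃ v ∈ unbNhdsZero τ A,
      ∀ w ∈ v, ∀ w' ∈ v, w + w' ∈ s := by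
    intro s hs
    obtain ⟨a, ⟨haA, ha0⟩, W, hW, hWs⟩ := (my_mem_F τ hτ hA).mp hs
    obtain ⟨W₁, hW₁, hW₁solid, hW₁W⟩ := hτ.2.2 W hW
    obtain ⟨V₂, hV₂, hhalf⟩ := exists_nhds_zero_half hW₁
    obtain ⟨W₃, hW₃, hW₃solid, hW₃V₂⟩ := hτ.2.2 V₂ hV₂
    refine ⟨(fun x => |x| ⊓ a) ⁻¹' W₃,
      (my_mem_F τ hτ hA).mpr ⟨a, ⟨haA, ha0⟩, W₃, hW₃, subset_rfl⟩, ?_⟩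
    intro w hw w' hw'
    refine hWs ?_
    show |w + w'| ⊓ a ∈ W
    set z := |w + w'| ⊓ a with hzdef
    set u := |w| ⊓ a with hudef
    set u' := |w'| ⊓ a with hu'def
    have hz0 : 0 ≤ z := le_inf (abs_nonneg _) ha0
    have hu0 : 0 ≤ u := le_inf (abs_nonneg _) ha0
    have hu'0 : 0 ≤ u' := le_inf (abs_nonneg _) ha0
    have hzle : z ≤ u + u' := my_abs_inf_add ha0
    have h1 : z ⊓ u ∈ W₃ := by
      refine hW₃solid hw ?_
      rw [abs_of_nonneg (le_inf hz0 hu0), abs_of_nonneg hu0]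
      exact inf_le_right
    have h2 : (z - u)⁺ ∈ W₃ := by
      refine hW₃solid hw' ?_
      rw [abs_of_nonneg (posPart_nonneg _), abs_of_nonneg hu'0]
      exact sup_le (sub_le_iff_le_add'.mpr hzle) hu'0
    have h3 := hhalf _ (hW₃V₂ h1) _ (hW₃V₂ h2)
    rw [my_decomp] at h3
    exact hW₁W h3
  show @nhds X (TopologicalSpace.mkOfNhds _) 0 = _
  rw [TopologicalSpace.nhds_mkOfNhds]
  · show Filter.map (fun y => (0 : X) + y) (unbNhdsZero τ A) = unbNhdsZero τ A
    have : (fun y => (0 : X) + y) = id := funext fun y => zero_add y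
    rw [this, Filter.map_id]
  · intro x
    calc pure x = Filter.map (fun y => x + y) (pure 0) := by rw [Filter.map_pure, add_zero]
      _ ≤ Filter.map (fun y => x + y) (unbNhdsZero τ A) := Filter.map_mono hpure0
  · intro x s hs
    have hs0 : (fun z => x + z) ⁻¹' s ∈ unbNhdsZero τ A := Filter.mem_map.mp hs
    obtain ⟨v, hv, hvsum⟩ := key _ hs0
    rw [Filter.eventually_map]
    filter_upwards [hv] with w hw
    refine Filter.mem_map.mpr (Filter.mem_of_superset hv fun w' hw' => ?_)
    show x + w + w' ∈ s
    have h4 := hvsum w hw w' hw'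
    rw [add_assoc]
    exact h4

/-- if `A` is an order dense ideal and `u_A τ` is locally bounded then
`A = X`. -/
theorem stmt14 (hArch : VLArchimedean X) (τ : TopologicalSpace X)
    (hτ : IsLocallySolidTop τ) (hT2 : @T2Space X τ)
    (A : Set X) (hA : IsOrderIdeal A) (hdense : OrderDense A)
    (hlb : LocallyBoundedTop (unbTopology τ A)) :
    A = Set.univ := by
  letI := τ
  haveI : IsTopologicalAddGroup X := hτ.1
  haveI : ContinuousSMul ℝ X := hτ.2.1
  haveI : T2Space X := hT2
  have hnhds : @nhds X (unbTopology τ A) 0 = unbNhdsZero τ A := my_unb_nhds τ hτ hA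
  obtain ⟨V, hV, hVb⟩ := hlb
  rw [hnhds] at hV
  obtain ⟨a, ⟨haA, ha0⟩, W, hW, hWV⟩ := (my_mem_F τ hτ hA).mp hV
  obtain ⟨W', hW', hW'solid, hW'W⟩ := hτ.2.2 W hW
  have main : ∀ x : X, 0 ≤ x → ∃ N : ℕ, x ≤ (N : ℝ) • a := by
    intro x hx
    -- choose N with (N : ℝ)⁻¹ • x ∈ W' and N ≥ 1
    have hsmul : Filter.Tendsto (fun t : ℝ => t • x) (nhds 0) (nhds 0) := by
      have hcont : Continuous fun t : ℝ => t • x := continuous_id.smul continuous_const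
      have := hcont.tendsto 0
      rwa [zero_smul] at this
    have htend : Filter.Tendsto (fun n : ℕ => ((n : ℝ))⁻¹ • x) Filter.atTop (nhds 0) :=
      hsmul.comp tendsto_inv_atTop_nhds_zero_nat
    have hev := (htend.eventually_mem hW').and (Filter.eventually_ge_atTop 1)
    obtain ⟨N, hNW, hN1⟩ := hev.exists
    set z := (x - (N : ℝ) • a)⁺ with hzdef
    by_cases hz : z = 0
    · exact ⟨N, sub_nonpos.mp (posPart_eq_zero.mp hz)⟩
    · exfalso
      have hz0 : 0 < z := lt_of_le_of_ne (posPart_nonneg _) (Ne.symm hz)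
      obtain ⟨y, hyA, hy0, hyz⟩ := hdense z hz0
      have hU' : ((fun v => |v| ⊓ y) ⁻¹' {y}ᶜ) ∈ @nhds X (unbTopology τ A) 0 := by
        rw [hnhds]
        exact (my_mem_F τ hτ hA).mpr ⟨y, ⟨hyA, hy0.le⟩, {y}ᶜ,
          compl_singleton_mem_nhds hy0.ne, subset_rfl⟩
      obtain ⟨l, hl, hbd⟩ := hVb _ hU'
      have hvV : l⁻¹ • z ∈ V := by
        refine hWV ?_
        show |l⁻¹ • z| ⊓ a ∈ W
        have habs : |l⁻¹ • z| = l⁻¹ • z :=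
          abs_of_nonneg (smul_nonneg (by positivity) (posPart_nonneg _))
        have hkey : (l⁻¹ • z) ⊓ a ≤ ((N : ℝ))⁻¹ • x :=
          my_keyK hx ha0 hN1 (by positivity)
        refine hW'W (hW'solid hNW ?_)
        rw [habs, abs_of_nonneg (le_inf (smul_nonneg (by positivity) (posPart_nonneg _)) ha0),
          abs_of_nonneg (smul_nonneg (by positivity) hx)]
        exact hkey
      have := hbd _ hvV
      rw [smul_inv_smul₀ hl.ne'] at this
      have hzy : |z| ⊓ y = y := by
        rw [abs_of_nonneg (posPart_nonneg _)]
        exact inf_eq_right.mpr hyz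
      have hmem : |z| ⊓ y ∈ ({y}ᶜ : Set X) := this
      rw [hzy] at hmem
      exact hmem rfl
  ext x
  simp only [Set.mem_univ, iff_true]
  obtain ⟨N, hN⟩ := main |x| (abs_nonneg x)
  have hNa : (N : ℝ) • a ∈ A := hA.2.2.1 (N : ℝ) a haA
  refine hA.2.2.2 hNa ?_
  rw [abs_of_nonneg (smul_nonneg (by positivity : (0:ℝ) ≤ (N:ℝ)) ha0)]
  exact hN
end

section
/- Let X be a vector lattice admitting a minimal topology τ. Then τ is locally bounded if and only if X is finite dimensional. -/
open Filter Set Topology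

set_option linter.unusedSectionVars false
set_option maxHeartbeats 1000000

variable {X : Type*} [Lattice X] [AddCommGroup X] [Module ℝ X]
  [CovariantClass X X (· + ·) (· ≤ ·)] [PosSMulMono ℝ X]

section VLBasic

lemma vl_smul_mono_scalar {a b : ℝ} {x : X} (hab : a ≤ b) (hx : 0 ≤ x) : a • x ≤ b • x := by
  rw [← sub_nonneg, ← sub_smul]
  exact smul_nonneg (sub_nonneg.2 hab) hx

lemma vl_smul_inf {c : ℝ} (hc : 0 < c) (x y : X) : c • (x ⊓ y) = c • x ⊓ c • y := by
  refine le_antisymm (le_inf (smul_le_smul_of_nonneg_left inf_le_left hc.le)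
    (smul_le_smul_of_nonneg_left inf_le_right hc.le)) ?_
  have h1 : c⁻¹ • (c • x ⊓ c • y) ≤ x := by
    have := smul_le_smul_of_nonneg_left (inf_le_left (a := c • x) (b := c • y))
      (inv_nonneg.2 hc.le)
    rwa [inv_smul_smul₀ hc.ne'] at this
  have h2 : c⁻¹ • (c • x ⊓ c • y) ≤ y := by
    have := smul_le_smul_of_nonneg_left (inf_le_right (a := c • x) (b := c • y))
      (inv_nonneg.2 hc.le)
    rwa [inv_smul_smul₀ hc.ne'] at this
  have := smul_le_smul_of_nonneg_left (le_inf h1 h2) hc.le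
  rwa [smul_inv_smul₀ hc.ne'] at this

lemma vl_smul_sup {c : ℝ} (hc : 0 < c) (x y : X) : c • (x ⊔ y) = c • x ⊔ c • y := by
  refine le_antisymm ?_ (sup_le (smul_le_smul_of_nonneg_left le_sup_left hc.le)
    (smul_le_smul_of_nonneg_left le_sup_right hc.le))
  have h1 : x ≤ c⁻¹ • (c • x ⊔ c • y) := by
    have := smul_le_smul_of_nonneg_left (le_sup_left (a := c • x) (b := c • y))
      (inv_nonneg.2 hc.le)
    rwa [inv_smul_smul₀ hc.ne'] at this
  have h2 : y ≤ c⁻¹ • (c • x ⊔ c • y) := by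
    have := smul_le_smul_of_nonneg_left (le_sup_right (a := c • x) (b := c • y))
      (inv_nonneg.2 hc.le)
    rwa [inv_smul_smul₀ hc.ne'] at this
  have := smul_le_smul_of_nonneg_left (sup_le h1 h2) hc.le
  rwa [smul_inv_smul₀ hc.ne'] at this

lemma vl_abs_eq_sup (a : X) : |a| = a ⊔ -a := rfl

lemma vl_abs_smul_nonneg {c : ℝ} (hc : 0 ≤ c) (x : X) : |c • x| = c • |x| := by
  rcases hc.lt_or_eq with hc | hc
  · rw [vl_abs_eq_sup, vl_abs_eq_sup, vl_smul_sup hc, smul_neg]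
  · simp [← hc]

lemma vl_abs_smul (c : ℝ) (x : X) : |c • x| = |c| • |x| := by
  rcases le_or_gt 0 c with hc | hc
  · rw [abs_of_nonneg hc, vl_abs_smul_nonneg hc]
  · have h : c • x = -((-c) • x) := by rw [neg_smul, neg_neg]
    rw [h, abs_neg, abs_of_neg hc, vl_abs_smul_nonneg (by linarith)]

lemma vl_abs_eq_zero {x : X} (h : |x| = 0) : x = 0 := by
  have h1 : x ≤ 0 := le_of_le_of_eq (le_abs_self x) h
  have h2 : -x ≤ 0 := le_of_le_of_eq (neg_le_abs x) h
  exact le_antisymm h1 (by simpa using h2)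

lemma vl_riesz {a b c : X} (ha : 0 ≤ a) (hb : 0 ≤ b) (hc : 0 ≤ c) :
    (a + b) ⊓ c ≤ a ⊓ c + b ⊓ c := by
  set t := (a + b) ⊓ c with ht
  have h1 : t - b ≤ a := sub_le_iff_le_add.2 inf_le_left
  have h1c : t - b ≤ c := sub_le_iff_le_add.2 (le_add_of_le_of_nonneg inf_le_right hb)
  have h2 : t - c ≤ a := sub_le_iff_le_add.2 (le_add_of_nonneg_of_le ha inf_le_right)
  have h2c : t - c ≤ c := sub_le_iff_le_add.2 (le_add_of_le_of_nonneg inf_le_right hc)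
  have key : t - b ⊓ c ≤ a ⊓ c := by
    rw [sub_inf]
    exact sup_le (le_inf h1 h1c) (le_inf h2 h2c)
  exact sub_le_iff_le_add.1 key

lemma vl_disj_add {y a b : X} (hy : 0 ≤ y) (ha : 0 ≤ a) (hb : 0 ≤ b)
    (h1 : a ⊓ y = 0) (h2 : b ⊓ y = 0) : (a + b) ⊓ y = 0 := by
  refine le_antisymm ?_ (le_inf (add_nonneg ha hb) hy)
  calc (a + b) ⊓ y ≤ a ⊓ y + b ⊓ y := vl_riesz ha hb hy
    _ = 0 := by rw [h1, h2, add_zero]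

lemma vl_disj_smul {x y : X} (hx : 0 ≤ x) (hy : 0 ≤ y) (h : x ⊓ y = 0)
    {c : ℝ} (hc : 0 ≤ c) : (c • x) ⊓ y = 0 := by
  set m : ℝ := max c 1 with hm
  have hm1 : (1:ℝ) ≤ m := le_max_right _ _
  have hmpos : (0:ℝ) < m := lt_of_lt_of_le one_pos hm1
  have hle : (c • x) ⊓ y ≤ (m • x) ⊓ (m • y) := by
    refine inf_le_inf (vl_smul_mono_scalar (le_max_left _ _) hx) ?_
    calc y = (1:ℝ) • y := (one_smul _ _).symm
      _ ≤ m • y := vl_smul_mono_scalar hm1 hy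
  rw [← vl_smul_inf hmpos, h, smul_zero] at hle
  exact le_antisymm hle (le_inf (smul_nonneg hc hx) hy)

lemma vl_abs_disj_smul {x y : X} (hy : 0 ≤ y) (h : |x| ⊓ y = 0) (c : ℝ) :
    |c • x| ⊓ y = 0 := by
  rw [vl_abs_smul]
  exact vl_disj_smul (abs_nonneg x) hy h (abs_nonneg c)

lemma vl_zero_inf {y : X} (hy : 0 ≤ y) : (0:X) ⊓ y = 0 :=
  le_antisymm inf_le_left (le_inf le_rfl hy)

lemma vl_sum_nonneg {s : Finset X} (hpos : ∀ a ∈ s, 0 ≤ a) : 0 ≤ ∑ a ∈ s, a := by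
  classical
  induction s using Finset.induction_on with
  | empty => simp
  | @insert a s ha ih =>
    rw [Finset.sum_insert ha]
    exact add_nonneg (hpos a (Finset.mem_insert_self a s))
      (ih fun b hb => hpos b (Finset.mem_insert_of_mem hb))

lemma vl_sum_disj {s : Finset X} {y : X} (hy : 0 ≤ y)
    (hpos : ∀ a ∈ s, 0 ≤ a) (h : ∀ a ∈ s, a ⊓ y = 0) : (∑ a ∈ s, a) ⊓ y = 0 := by
  classical
  induction s using Finset.induction_on with
  | empty => simpa using vl_zero_inf hy
  | @insert a s ha ih =>
    rw [Finset.sum_insert ha]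
    exact vl_disj_add hy (hpos a (Finset.mem_insert_self a s))
      (vl_sum_nonneg fun b hb => hpos b (Finset.mem_insert_of_mem hb))
      (h a (Finset.mem_insert_self a s))
      (ih (fun b hb => hpos b (Finset.mem_insert_of_mem hb))
        (fun b hb => h b (Finset.mem_insert_of_mem hb)))

lemma vl_sum_disj_le {s : Finset X} {x : X} (hx : 0 ≤ x)
    (hpos : ∀ a ∈ s, 0 ≤ a) (hle : ∀ a ∈ s, a ≤ x)
    (hdisj : ∀ a ∈ s, ∀ b ∈ s, a ≠ b → a ⊓ b = 0) :
    (∑ a ∈ s, a) ≤ x := by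
  classical
  induction s using Finset.induction_on with
  | empty => simpa using hx
  | @insert a s ha ih =>
    rw [Finset.sum_insert ha]
    have hsum_pos : 0 ≤ ∑ b ∈ s, b :=
      vl_sum_nonneg fun b hb => hpos b (Finset.mem_insert_of_mem hb)
    have hsum_le : (∑ b ∈ s, b) ≤ x := ih (fun b hb => hpos b (Finset.mem_insert_of_mem hb))
      (fun b hb => hle b (Finset.mem_insert_of_mem hb))
      (fun b hb c hc hbc => hdisj b (Finset.mem_insert_of_mem hb) c (Finset.mem_insert_of_mem hc) hbc)
    have hdisj' : a ⊓ (∑ b ∈ s, b) = 0 := by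
      rw [inf_comm]
      refine vl_sum_disj (hpos a (Finset.mem_insert_self a s))
        (fun b hb => hpos b (Finset.mem_insert_of_mem hb)) (fun b hb => ?_)
      exact hdisj b (Finset.mem_insert_of_mem hb) a (Finset.mem_insert_self a s)
        (fun hba => ha (hba ▸ hb))
    calc a + ∑ b ∈ s, b = a ⊓ (∑ b ∈ s, b) + (a ⊔ ∑ b ∈ s, b) := by rw [inf_add_sup]
      _ = a ⊔ ∑ b ∈ s, b := by rw [hdisj', zero_add]
      _ ≤ x := sup_le (hle a (Finset.mem_insert_self a s)) hsum_le

end VLBasic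

section VLComb

/-- A (not necessarily closed) order ideal, as a predicate. -/
def VLIdeal (B : Set X) : Prop :=
  (0:X) ∈ B ∧ (∀ x ∈ B, ∀ y ∈ B, x + y ∈ B) ∧ (∀ (c:ℝ), ∀ x ∈ B, c • x ∈ B) ∧
    ∀ ⦃x y : X⦄, x ∈ B → |y| ≤ |x| → y ∈ B

def VLAtom (c : X) : Prop := 0 < c ∧ ∀ z : X, 0 < z → z ≤ c → ∃ t : ℝ, z = t • c

/-- A finite disjoint family of nonzero positive vectors inside `B`. -/
def VLFam (B : Set X) (F : Finset X) : Prop :=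
  ↑F ⊆ B ∧ (∀ x ∈ F, 0 < x) ∧ ∀ x ∈ F, ∀ y ∈ F, x ≠ y → x ⊓ y = 0

/-- disjoint complement of `b` -/
def VLdComp (b : X) : Set X := {x : X | |x| ⊓ b = 0}

/-- double disjoint complement of `b` -/
def VLddComp (b : X) : Set X := {x : X | ∀ z : X, 0 ≤ z → z ⊓ b = 0 → |x| ⊓ z = 0}

lemma vl_abs_mem {B : Set X} (hB : VLIdeal B) {x : X} (hx : x ∈ B) : |x| ∈ B :=
  hB.2.2.2 hx (le_of_eq (abs_abs x))

lemma vl_posPart_le_abs (x : X) : x⁺ ≤ |x| := by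
  rw [← posPart_add_negPart x]
  exact le_add_of_nonneg_right (negPart_nonneg x)

lemma vl_negPart_le_abs (x : X) : x⁻ ≤ |x| := by
  rw [← posPart_add_negPart x]
  exact le_add_of_nonneg_left (posPart_nonneg x)

lemma vl_posPart_mem {B : Set X} (hB : VLIdeal B) {x : X} (hx : x ∈ B) : x⁺ ∈ B :=
  hB.2.2.2 hx (by rw [abs_of_nonneg (posPart_nonneg x)]; exact vl_posPart_le_abs x)

lemma vl_negPart_mem {B : Set X} (hB : VLIdeal B) {x : X} (hx : x ∈ B) : x⁻ ∈ B :=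
  hB.2.2.2 hx (by rw [abs_of_nonneg (negPart_nonneg x)]; exact vl_negPart_le_abs x)

lemma vl_sub_mem {B : Set X} (hB : VLIdeal B) {x y : X} (hx : x ∈ B) (hy : y ∈ B) :
    x - y ∈ B := by
  have := hB.2.1 x hx ((-1:ℝ) • y) (hB.2.2.1 (-1) y hy)
  simpa [sub_eq_add_neg] using this

lemma vl_ideal_univ : VLIdeal (univ : Set X) :=
  ⟨trivial, fun _ _ _ _ => trivial, fun _ _ _ => trivial, fun _ _ _ _ => trivial⟩

lemma vl_ideal_dComp {B : Set X} (hB : VLIdeal B) {b : X} (hb : 0 ≤ b) :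
    VLIdeal (B ∩ VLdComp b) := by
  constructor
  · exact ⟨hB.1, by simp [VLdComp, vl_zero_inf hb]⟩
  refine ⟨fun x hx y hy => ⟨hB.2.1 x hx.1 y hy.1, ?_⟩, fun c x hx => ⟨hB.2.2.1 c x hx.1, ?_⟩,
    fun x y hx hxy => ⟨hB.2.2.2 hx.1 hxy, ?_⟩⟩
  · have h1 : |x + y| ⊓ b ≤ (|x| + |y|) ⊓ b := inf_le_inf_right b (abs_add_le x y)
    have h2 : (|x| + |y|) ⊓ b = 0 := vl_disj_add hb (abs_nonneg x) (abs_nonneg y) hx.2 hy.2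
    exact le_antisymm (h1.trans_eq h2) (le_inf (abs_nonneg _) hb)
  · exact vl_abs_disj_smul hb hx.2 c
  · exact le_antisymm (le_trans (inf_le_inf_right b hxy) hx.2.le)
      (le_inf (abs_nonneg _) hb)

lemma vl_ideal_ddComp {B : Set X} (hB : VLIdeal B) {b : X} :
    VLIdeal (B ∩ VLddComp b) := by
  constructor
  · exact ⟨hB.1, fun z hz hzb => by simp [vl_zero_inf hz]⟩
  refine ⟨fun x hx y hy => ⟨hB.2.1 x hx.1 y hy.1, fun z hz hzb => ?_⟩,
    fun c x hx => ⟨hB.2.2.1 c x hx.1, fun z hz hzb => ?_⟩,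
    fun x y hx hxy => ⟨hB.2.2.2 hx.1 hxy, fun z hz hzb => ?_⟩⟩
  · have h1 : |x + y| ⊓ z ≤ (|x| + |y|) ⊓ z := inf_le_inf_right z (abs_add_le x y)
    have h2 : (|x| + |y|) ⊓ z = 0 :=
      vl_disj_add hz (abs_nonneg x) (abs_nonneg y) (hx.2 z hz hzb) (hy.2 z hz hzb)
    exact le_antisymm (h1.trans_eq h2) (le_inf (abs_nonneg _) hz)
  · exact vl_abs_disj_smul hz (hx.2 z hz hzb) c
  · exact le_antisymm (le_trans (inf_le_inf_right z hxy) (hx.2 z hz hzb).le)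
      (le_inf (abs_nonneg _) hz)

/-- The largest coefficient `t` with `t • c ≤ x`. -/
noncomputable def vlCoeff (c x : X) : ℝ := sSup {s : ℝ | s • c ≤ x}

lemma vl_coeff_spec (hArch : VLArchimedean X) {c x : X} (hc : 0 < c) (hx : 0 ≤ x) :
    0 ≤ vlCoeff c x ∧ vlCoeff c x • c ≤ x ∧ ∀ s : ℝ, s • c ≤ x → s ≤ vlCoeff c x := by
  set S := {s : ℝ | s • c ≤ x} with hS
  have h0 : (0:ℝ) ∈ S := by simp [hS, hx]
  have hnat : ∃ n : ℕ, ¬ ((n:ℝ) • c ≤ x) := by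
    by_contra hcon
    push_neg at hcon
    have : c = 0 := hArch c x hc.le (fun n => by
      rw [← Nat.cast_smul_eq_nsmul ℝ n c]; exact hcon n)
    exact hc.ne' this
  obtain ⟨n₀, hn₀⟩ := hnat
  have hbdd : BddAbove S := by
    refine ⟨n₀, fun s hs => ?_⟩
    by_contra hlt
    push_neg at hlt
    exact hn₀ (le_trans (vl_smul_mono_scalar hlt.le hc.le) hs)
  have hne : S.Nonempty := ⟨0, h0⟩
  have hmax : ∀ s : ℝ, s • c ≤ x → s ≤ vlCoeff c x := fun s hs => le_csSup hbdd hs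
  have hnn : 0 ≤ vlCoeff c x := hmax 0 (by simp [hx])
  refine ⟨hnn, ?_, hmax⟩
  -- closedness
  set z := (vlCoeff c x • c - x)⁺ with hz
  have hzle : ∀ n : ℕ, z ≤ (1/(n+1) : ℝ) • c := by
    intro n
    have hlt : vlCoeff c x - 1/(n+1) < sSup S := by
      have : (0:ℝ) < 1/(n+1) := by positivity
      exact sub_lt_self (vlCoeff c x) this
    obtain ⟨s, hsS, hs⟩ := exists_lt_of_lt_csSup hne hlt
    have h1 : vlCoeff c x • c - x ≤ (1/(n+1) : ℝ) • c := by
      have h2 : vlCoeff c x • c - x ≤ vlCoeff c x • c - s • c := by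
        have := hsS
        simp only [hS, mem_setOf_eq] at this
        exact sub_le_sub_left this _
      have h3 : vlCoeff c x • c - s • c = (vlCoeff c x - s) • c := by rw [sub_smul]
      have h4 : (vlCoeff c x - s) • c ≤ (1/(n+1) : ℝ) • c :=
        vl_smul_mono_scalar (sub_lt_comm.mp hs).le hc.le
      exact (h2.trans_eq h3).trans h4
    exact sup_le h1 (smul_nonneg (by positivity) hc.le)
  have hzarch : ∀ n : ℕ, n • z ≤ c := by
    intro n
    have h1 : ((n:ℝ)) • z ≤ ((n+1:ℝ)) • z :=
      vl_smul_mono_scalar (le_add_of_nonneg_right zero_le_one) (posPart_nonneg _)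
    have h2 : ((n+1:ℝ)) • z ≤ ((n+1:ℝ)) • ((1/(n+1) : ℝ) • c) :=
      smul_le_smul_of_nonneg_left (hzle n) (by positivity)
    have h3 : ((n+1:ℝ)) • ((1/(n+1) : ℝ) • c) = c := by
      rw [smul_smul, show ((n:ℝ)+1) * (1/((n:ℝ)+1)) = 1 by
        field_simp, one_smul]
    rw [← Nat.cast_smul_eq_nsmul ℝ n z]
    exact h1.trans (h2.trans_eq h3)
  have hz0 : z = 0 := hArch z c (posPart_nonneg _) hzarch
  have : vlCoeff c x • c - x ≤ 0 := posPart_eq_zero.mp hz0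
  exact sub_nonpos.mp this

lemma vl_sum_le_sum {ι : Type*} {s : Finset ι} {g h : ι → X}
    (hle : ∀ i ∈ s, g i ≤ h i) : ∑ i ∈ s, g i ≤ ∑ i ∈ s, h i := by
  classical
  induction s using Finset.induction_on with
  | empty => simp
  | @insert a s ha ih =>
    rw [Finset.sum_insert ha, Finset.sum_insert ha]
    exact add_le_add (hle a (Finset.mem_insert_self a s))
      (ih fun b hb => hle b (Finset.mem_insert_of_mem hb))

/-- absolute value of a finite sum -/
lemma vl_abs_sum_le {ι : Type*} (s : Finset ι) (g : ι → X) :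
    |∑ i ∈ s, g i| ≤ ∑ i ∈ s, |g i| := by
  classical
  induction s using Finset.induction_on with
  | empty => simp
  | @insert a s ha ih =>
    rw [Finset.sum_insert ha, Finset.sum_insert ha]
    exact le_trans (abs_add_le _ _) (add_le_add le_rfl ih)

lemma vl_sum_nonneg_fun {ι : Type*} {s : Finset ι} {g : ι → X}
    (hpos : ∀ i ∈ s, 0 ≤ g i) : 0 ≤ ∑ i ∈ s, g i := by
  classical
  induction s using Finset.induction_on with
  | empty => simp
  | @insert a s ha ih =>
    rw [Finset.sum_insert ha]
    exact add_nonneg (hpos a (Finset.mem_insert_self a s))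
      (ih fun b hb => hpos b (Finset.mem_insert_of_mem hb))

lemma vl_sum_disj_fun {ι : Type*} {s : Finset ι} {g : ι → X} {y : X} (hy : 0 ≤ y)
    (hpos : ∀ i ∈ s, 0 ≤ g i) (h : ∀ i ∈ s, g i ⊓ y = 0) : (∑ i ∈ s, g i) ⊓ y = 0 := by
  classical
  induction s using Finset.induction_on with
  | empty => simpa using vl_zero_inf hy
  | @insert a s ha ih =>
    rw [Finset.sum_insert ha]
    exact vl_disj_add hy (hpos a (Finset.mem_insert_self a s))
      (vl_sum_nonneg_fun fun b hb => hpos b (Finset.mem_insert_of_mem hb))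
      (h a (Finset.mem_insert_self a s))
      (ih (fun b hb => hpos b (Finset.mem_insert_of_mem hb))
        (fun b hb => h b (Finset.mem_insert_of_mem hb)))

/-- an element disjoint from all members of `C` is disjoint from everything in the span. -/
lemma vl_span_disj {r : X} (hr : 0 ≤ r) {C : Finset X} (hCpos : ∀ c ∈ C, 0 ≤ c)
    (hdisj : ∀ c ∈ C, r ⊓ c = 0) {w : X} (hw : w ∈ Submodule.span ℝ (↑C : Set X)) :
    r ⊓ |w| = 0 := by
  classical
  obtain ⟨f, -, rfl⟩ := Submodule.mem_span_finset.mp hw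
  have habs : |∑ c ∈ C, f c • c| ≤ ∑ c ∈ C, |f c| • c := by
    refine le_trans (vl_abs_sum_le _ _) ?_
    refine vl_sum_le_sum fun c hc => ?_
    rw [vl_abs_smul, abs_of_nonneg (hCpos c hc)]
  have hsum : (∑ c ∈ C, |f c| • c) ⊓ r = 0 := by
    refine vl_sum_disj_fun hr (fun c hc => smul_nonneg (abs_nonneg _) (hCpos c hc))
      (fun c hc => ?_)
    exact vl_disj_smul (hCpos c hc) hr (by rw [inf_comm]; exact hdisj c hc) (abs_nonneg _)
  have h1 : r ⊓ |∑ c ∈ C, f c • c| ≤ r ⊓ (∑ c ∈ C, |f c| • c) := inf_le_inf_left r habs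
  rw [inf_comm] at hsum
  exact le_antisymm (h1.trans_eq hsum) (le_inf hr (abs_nonneg _))

end VLComb

section VLHolder

lemma vl_abs_pos {x : X} (hx : x ≠ 0) : 0 < |x| :=
  (abs_nonneg x).lt_of_ne' (fun h => hx (vl_abs_eq_zero h))

lemma vl_holder (hArch : VLArchimedean X) {B : Set X} (hB : VLIdeal B)
    (hnp : ∀ x ∈ B, ∀ y ∈ B, 0 < x → 0 < y → x ⊓ y ≠ 0) :
    ∃ C : Finset X, ↑C ⊆ B ∧ (∀ c ∈ C, VLAtom c) ∧
      (∀ c ∈ C, ∀ c' ∈ C, c ≠ c' → c ⊓ c' = 0) ∧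
      B ⊆ (Submodule.span ℝ (↑C : Set X) : Set X) := by
  classical
  by_cases htriv : ∀ x ∈ B, x = 0
  · refine ⟨∅, by simp, by simp, by simp, fun x hx => ?_⟩
    rw [htriv x hx]
    exact Submodule.zero_mem _
  push_neg at htriv
  obtain ⟨w, hwB, hw0⟩ := htriv
  set x₀ := |w| with hx₀
  have hx₀B : x₀ ∈ B := vl_abs_mem hB hwB
  have hx₀pos : 0 < x₀ := vl_abs_pos hw0
  have htot : ∀ a ∈ B, ∀ b ∈ B, a ≤ b ∨ b ≤ a := by
    intro a ha b hb
    have hd : (a - b) ∈ B := vl_sub_mem hB ha hb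
    have h1 : (a - b)⁺ ∈ B := vl_posPart_mem hB hd
    have h2 : (a - b)⁻ ∈ B := vl_negPart_mem hB hd
    have h3 := posPart_inf_negPart_eq_zero (a - b)
    by_cases hp : (a - b)⁺ = 0
    · exact Or.inl (sub_nonpos.mp (posPart_eq_zero.mp hp))
    · by_cases hn : (a - b)⁻ = 0
      · exact Or.inr (sub_nonneg.mp (negPart_eq_zero.mp hn))
      · exact absurd h3 (hnp _ h1 _ h2 ((posPart_nonneg _).lt_of_ne' hp)
          ((negPart_nonneg _).lt_of_ne' hn))
  have hrep : ∀ y ∈ B, 0 ≤ y → y = vlCoeff x₀ y • x₀ := by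
    intro y hyB hy
    obtain ⟨htnn, htle, htmax⟩ := vl_coeff_spec hArch hx₀pos hy
    set r := y - vlCoeff x₀ y • x₀ with hr
    have hrB : r ∈ B := vl_sub_mem hB hyB (hB.2.2.1 _ _ hx₀B)
    have hrpos : 0 ≤ r := sub_nonneg.2 htle
    have harch : ∀ n : ℕ, n • r ≤ x₀ := by
      intro n
      have hx₀eps : (1/(n+1) : ℝ) • x₀ ∈ B := hB.2.2.1 _ _ hx₀B
      rcases htot _ hx₀eps _ hrB with h | h
      · exfalso
        have hle : (vlCoeff x₀ y + 1/(n+1)) • x₀ ≤ y := by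
          rw [add_smul]
          calc vlCoeff x₀ y • x₀ + (1/(n+1) : ℝ) • x₀
              ≤ vlCoeff x₀ y • x₀ + r := add_le_add le_rfl h
            _ = y := by rw [hr]; abel
        have := htmax _ hle
        have hpos : (0:ℝ) < 1/(n+1) := by positivity
        linarith
      · have h1 : ((n:ℝ)) • r ≤ ((n+1:ℝ)) • r :=
          vl_smul_mono_scalar (le_add_of_nonneg_right zero_le_one) hrpos
        have h2 : ((n+1:ℝ)) • r ≤ ((n+1:ℝ)) • ((1/(n+1) : ℝ) • x₀) :=
          smul_le_smul_of_nonneg_left h (by positivity)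
        have h3 : ((n+1:ℝ)) • ((1/(n+1) : ℝ) • x₀) = x₀ := by
          rw [smul_smul, show ((n:ℝ)+1) * (1/((n:ℝ)+1)) = 1 by field_simp, one_smul]
        rw [← Nat.cast_smul_eq_nsmul ℝ n r]
        exact h1.trans (h2.trans_eq h3)
    have hr0 : r = 0 := hArch r x₀ hrpos harch
    have := sub_eq_zero.mp hr0
    exact this
  refine ⟨{x₀}, by simpa using hx₀B, ?_, ?_, ?_⟩
  · intro c hc
    rw [Finset.mem_singleton] at hc
    subst hc
    refine ⟨hx₀pos, fun z hz hzle => ?_⟩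
    have hzB : z ∈ B := hB.2.2.2 hx₀B
      (by rw [abs_of_nonneg hz.le, abs_of_nonneg hx₀pos.le]; exact hzle)
    exact ⟨vlCoeff x₀ z, hrep z hzB hz.le⟩
  · intro c hc c' hc' hne
    rw [Finset.mem_singleton] at hc hc'
    exact absurd (hc.trans hc'.symm) hne
  · intro y hy
    have h1 := hrep _ (vl_posPart_mem hB hy) (posPart_nonneg y)
    have h2 := hrep _ (vl_negPart_mem hB hy) (negPart_nonneg y)
    have : y = (vlCoeff x₀ y⁺ - vlCoeff x₀ y⁻) • x₀ := by
      rw [sub_smul, ← h1, ← h2, posPart_sub_negPart]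
    rw [this]
    simp only [Finset.coe_singleton, SetLike.mem_coe]
    exact Submodule.smul_mem _ _ (Submodule.mem_span_singleton_self x₀)

end VLHolder

section VLSpan

lemma vl_pos_inf_eq_abs_inf {x b : X} (hx : 0 < x) : x ⊓ b = |x| ⊓ b := by
  rw [abs_of_nonneg hx.le]

lemma vl_sum_disj_le_fun {ι : Type*} {s : Finset ι} {g : ι → X} {x : X} (hx : 0 ≤ x)
    (hpos : ∀ i ∈ s, 0 ≤ g i) (hle : ∀ i ∈ s, g i ≤ x)
    (hdisj : ∀ i ∈ s, ∀ j ∈ s, i ≠ j → g i ⊓ g j = 0) :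
    (∑ i ∈ s, g i) ≤ x := by
  classical
  induction s using Finset.induction_on with
  | empty => simpa using hx
  | @insert a s ha ih =>
    rw [Finset.sum_insert ha]
    have hsum_pos : 0 ≤ ∑ b ∈ s, g b :=
      vl_sum_nonneg_fun fun b hb => hpos b (Finset.mem_insert_of_mem hb)
    have hsum_le : (∑ b ∈ s, g b) ≤ x := ih (fun b hb => hpos b (Finset.mem_insert_of_mem hb))
      (fun b hb => hle b (Finset.mem_insert_of_mem hb))
      (fun b hb c hc hbc => hdisj b (Finset.mem_insert_of_mem hb) c
        (Finset.mem_insert_of_mem hc) hbc)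
    have hdisj' : g a ⊓ (∑ b ∈ s, g b) = 0 := by
      rw [inf_comm]
      refine vl_sum_disj_fun (hpos a (Finset.mem_insert_self a s))
        (fun b hb => hpos b (Finset.mem_insert_of_mem hb)) (fun b hb => ?_)
      exact hdisj b (Finset.mem_insert_of_mem hb) a (Finset.mem_insert_self a s)
        (fun hba => ha (hba ▸ hb))
    calc g a + ∑ b ∈ s, g b = g a ⊓ (∑ b ∈ s, g b) + (g a ⊔ ∑ b ∈ s, g b) := by
          rw [inf_add_sup]
      _ = g a ⊔ ∑ b ∈ s, g b := by rw [hdisj', zero_add]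
      _ ≤ x := sup_le (hle a (Finset.mem_insert_self a s)) hsum_le

lemma vl_sum_mem {B : Set X} (hB : VLIdeal B) {ι : Type*} {s : Finset ι} {g : ι → X}
    (h : ∀ i ∈ s, g i ∈ B) : (∑ i ∈ s, g i) ∈ B := by
  classical
  induction s using Finset.induction_on with
  | empty => simpa using hB.1
  | @insert a s ha ih =>
    rw [Finset.sum_insert ha]
    exact hB.2.1 _ (h a (Finset.mem_insert_self a s)) _
      (ih fun b hb => h b (Finset.mem_insert_of_mem hb))

lemma vl_span_of_bdd (hArch : VLArchimedean X) :
    ∀ (k : ℕ) (B : Set X), VLIdeal B →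
    (∀ F : Finset X, VLFam B F → F.card ≤ k) →
    ∃ C : Finset X, ↑C ⊆ B ∧ (∀ c ∈ C, VLAtom c) ∧
      (∀ c ∈ C, ∀ c' ∈ C, c ≠ c' → c ⊓ c' = 0) ∧
      B ⊆ (Submodule.span ℝ (↑C : Set X) : Set X) := by
  classical
  intro k
  induction k with
  | zero =>
    intro B hB hbd
    refine ⟨∅, by simp, by simp, by simp, fun x hx => ?_⟩
    by_cases hx0 : x = 0
    · rw [hx0]; exact Submodule.zero_mem _
    · exfalso
      have habs : |x| ∈ B := vl_abs_mem hB hx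
      have hfam : VLFam B {|x|} := by
        refine ⟨by simpa using habs, ?_, ?_⟩
        · intro a ha; rw [Finset.mem_singleton] at ha; subst ha; exact vl_abs_pos hx0
        · intro a ha b hb hne
          rw [Finset.mem_singleton] at ha hb
          exact absurd (ha.trans hb.symm) hne
      have := hbd _ hfam
      simp at this
  | succ k ih =>
    intro B hB hbd
    by_cases hpair : ∃ u, u ∈ B ∧ ∃ v, v ∈ B ∧ 0 < u ∧ 0 < v ∧ u ⊓ v = 0
    · obtain ⟨u, huB, v, hvB, hu, hv, huv⟩ := hpair
      set B₁ := B ∩ VLdComp u with hB₁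
      set B₂ := B ∩ VLddComp u with hB₂
      have hB₁i : VLIdeal B₁ := vl_ideal_dComp hB hu.le
      have hB₂i : VLIdeal B₂ := vl_ideal_ddComp hB
      -- elements of B₂ are disjoint from v
      have hB₂v : ∀ x ∈ B₂, |x| ⊓ v = 0 := fun x hx =>
        hx.2 v hv.le (by rw [inf_comm]; exact huv)
      -- bound on families in B₁
      have hbd₁ : ∀ F : Finset X, VLFam B₁ F → F.card ≤ k := by
        intro F hF
        have huF : u ∉ F := by
          intro huF
          have := (hF.1 huF).2
          rw [VLdComp, mem_setOf_eq, abs_of_nonneg hu.le, inf_idem] at this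
          exact hu.ne' this
        have hfam : VLFam B (insert u F) := by
          refine ⟨?_, ?_, ?_⟩
          · intro a ha
            rcases Finset.mem_insert.mp ha with rfl | ha
            · exact huB
            · exact (hF.1 ha).1
          · intro a ha
            rcases Finset.mem_insert.mp ha with rfl | ha
            · exact hu
            · exact hF.2.1 a ha
          · intro a ha b hb hne
            rcases Finset.mem_insert.mp ha with ha' | ha'
            · rcases Finset.mem_insert.mp hb with hb' | hb'
              · exact absurd (ha'.trans hb'.symm) hne
              · rw [ha', inf_comm, vl_pos_inf_eq_abs_inf (hF.2.1 b hb')]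
                exact (hF.1 hb').2
            · rcases Finset.mem_insert.mp hb with hb' | hb'
              · rw [hb', vl_pos_inf_eq_abs_inf (hF.2.1 a ha')]
                exact (hF.1 ha').2
              · exact hF.2.2 a ha' b hb' hne
        have := hbd _ hfam
        rw [Finset.card_insert_of_notMem huF] at this
        omega
      -- bound on families in B₂
      have hbd₂ : ∀ F : Finset X, VLFam B₂ F → F.card ≤ k := by
        intro F hF
        have hvF : v ∉ F := by
          intro hvF
          have := hB₂v v (hF.1 hvF)
          rw [abs_of_nonneg hv.le, inf_idem] at this
          exact hv.ne' this
        have hfam : VLFam B (insert v F) := by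
          refine ⟨?_, ?_, ?_⟩
          · intro a ha
            rcases Finset.mem_insert.mp ha with rfl | ha
            · exact hvB
            · exact (hF.1 ha).1
          · intro a ha
            rcases Finset.mem_insert.mp ha with rfl | ha
            · exact hv
            · exact hF.2.1 a ha
          · intro a ha b hb hne
            rcases Finset.mem_insert.mp ha with ha' | ha'
            · rcases Finset.mem_insert.mp hb with hb' | hb'
              · exact absurd (ha'.trans hb'.symm) hne
              · rw [ha', inf_comm, vl_pos_inf_eq_abs_inf (hF.2.1 b hb')]
                exact hB₂v b (hF.1 hb')
            · rcases Finset.mem_insert.mp hb with hb' | hb'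
              · rw [hb', vl_pos_inf_eq_abs_inf (hF.2.1 a ha')]
                exact hB₂v a (hF.1 ha')
              · exact hF.2.2 a ha' b hb' hne
        have := hbd _ hfam
        rw [Finset.card_insert_of_notMem hvF] at this
        omega
      obtain ⟨C₁, hC₁B, hC₁atom, hC₁disj, hC₁span⟩ := ih B₁ hB₁i hbd₁
      obtain ⟨C₂, hC₂B, hC₂atom, hC₂disj, hC₂span⟩ := ih B₂ hB₂i hbd₂
      set C := C₁ ∪ C₂ with hC
      have hCpos : ∀ c ∈ C, 0 < c := by
        intro c hc
        rcases Finset.mem_union.mp hc with hc | hc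
        · exact (hC₁atom c hc).1
        · exact (hC₂atom c hc).1
      -- cross disjointness
      have hcross : ∀ c₁ ∈ C₁, ∀ c₂ ∈ C₂, c₁ ⊓ c₂ = 0 := by
        intro c₁ hc₁ c₂ hc₂
        have h₁ : c₁ ⊓ u = 0 := by
          rw [vl_pos_inf_eq_abs_inf (hC₁atom c₁ hc₁).1]
          exact (hC₁B hc₁).2
        have h₂ : |c₂| ⊓ c₁ = 0 := (hC₂B hc₂).2 c₁ (hC₁atom c₁ hc₁).1.le h₁
        rw [inf_comm]
        rw [vl_pos_inf_eq_abs_inf (hC₂atom c₂ hc₂).1]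
        exact h₂
      have hCdisj : ∀ c ∈ C, ∀ c' ∈ C, c ≠ c' → c ⊓ c' = 0 := by
        intro c hc c' hc' hne
        rcases Finset.mem_union.mp hc with h | h <;> rcases Finset.mem_union.mp hc' with h' | h'
        · exact hC₁disj c h c' h' hne
        · exact hcross c h c' h'
        · rw [inf_comm]; exact hcross c' h' c h
        · exact hC₂disj c h c' h' hne
      have hCatom : ∀ c ∈ C, VLAtom c := by
        intro c hc
        rcases Finset.mem_union.mp hc with h | h
        · exact hC₁atom c h
        · exact hC₂atom c h
      have hCB : ↑C ⊆ B := by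
        intro c hc
        rcases Finset.mem_union.mp hc with h | h
        · exact (hC₁B h).1
        · exact (hC₂B h).1
      refine ⟨C, hCB, hCatom, hCdisj, ?_⟩
      -- span property, first for nonnegative elements
      have hspan_pos : ∀ x ∈ B, 0 ≤ x → x ∈ (Submodule.span ℝ (↑C : Set X) : Set X) := by
        intro x hxB hx
        set r := x - ∑ c ∈ C, vlCoeff c x • c with hr
        have hcoeff : ∀ c ∈ C, 0 ≤ vlCoeff c x ∧ vlCoeff c x • c ≤ x ∧
            ∀ s : ℝ, s • c ≤ x → s ≤ vlCoeff c x := fun c hc =>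
          vl_coeff_spec hArch (hCpos c hc) hx
        have hterm_pos : ∀ c ∈ C, 0 ≤ vlCoeff c x • c := fun c hc =>
          smul_nonneg (hcoeff c hc).1 (hCpos c hc).le
        have hterm_disj : ∀ c ∈ C, ∀ c' ∈ C, c ≠ c' →
            (vlCoeff c x • c) ⊓ (vlCoeff c' x • c') = 0 := by
          intro c hc c' hc' hne
          have h0 : c ⊓ c' = 0 := hCdisj c hc c' hc' hne
          have d1 : (vlCoeff c x • c) ⊓ c' = 0 :=
            vl_disj_smul (hCpos c hc).le (hCpos c' hc').le h0 (hcoeff c hc).1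
          have d2 : (vlCoeff c' x • c') ⊓ (vlCoeff c x • c) = 0 :=
            vl_disj_smul (hCpos c' hc').le (hterm_pos c hc)
              (by rw [inf_comm]; exact d1) (hcoeff c' hc').1
          rw [inf_comm]
          exact d2
        have hrpos : 0 ≤ r := by
          rw [hr, sub_nonneg]
          exact vl_sum_disj_le_fun hx hterm_pos (fun c hc => (hcoeff c hc).2.1) hterm_disj
        have hβ : ∀ c₀ ∈ C, r ⊓ c₀ = 0 := by
          intro c₀ hc₀
          set w := x - vlCoeff c₀ x • c₀ with hw
          have hwpos : 0 ≤ w := sub_nonneg.2 (hcoeff c₀ hc₀).2.1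
          have hrw : r ≤ w := by
            have hsum : vlCoeff c₀ x • c₀ + ∑ c ∈ C.erase c₀, vlCoeff c x • c
                = ∑ c ∈ C, vlCoeff c x • c := Finset.add_sum_erase C (fun c => vlCoeff c x • c) hc₀
            have herase_pos : 0 ≤ ∑ c ∈ C.erase c₀, vlCoeff c x • c :=
              vl_sum_nonneg_fun fun c hc => hterm_pos c (Finset.mem_of_mem_erase hc)
            have : r = w - ∑ c ∈ C.erase c₀, vlCoeff c x • c := by
              rw [hr, hw, ← hsum]
              abel
            rw [this]
            exact sub_le_self w herase_pos
          have hwc : w ⊓ c₀ = 0 := by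
            by_contra hz
            have hzpos : 0 < w ⊓ c₀ := (le_inf hwpos (hCpos c₀ hc₀).le).lt_of_ne'  hz
            obtain ⟨s, hs⟩ := (hCatom c₀ hc₀).2 _ hzpos inf_le_right
            have hspos : 0 < s := by
              by_contra hs0
              push_neg at hs0
              have : w ⊓ c₀ ≤ 0 := by
                rw [hs]
                calc s • c₀ ≤ (0:ℝ) • c₀ := vl_smul_mono_scalar hs0 (hCpos c₀ hc₀).le
                  _ = 0 := zero_smul _ _
              exact hz (le_antisymm this (le_inf hwpos (hCpos c₀ hc₀).le))
            have hle : (vlCoeff c₀ x + s) • c₀ ≤ x := by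
              rw [add_smul]
              have h1 : s • c₀ ≤ w := hs ▸ inf_le_left
              calc vlCoeff c₀ x • c₀ + s • c₀ ≤ vlCoeff c₀ x • c₀ + w := add_le_add le_rfl h1
                _ = x := by rw [hw]; abel
            have := (hcoeff c₀ hc₀).2.2 _ hle
            linarith
          refine le_antisymm ?_ (le_inf hrpos (hCpos c₀ hc₀).le)
          calc r ⊓ c₀ ≤ w ⊓ c₀ := inf_le_inf_right c₀ hrw
            _ = 0 := hwc
        -- r is disjoint from u
        have huB₂ : u ∈ B₂ := ⟨huB, fun z hz hzu => by
          rw [abs_of_nonneg hu.le, inf_comm]; exact hzu⟩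
        have hru : r ⊓ u = 0 := by
          have h1 : r ⊓ |u| = 0 := vl_span_disj hrpos (fun c hc => (hC₂atom c hc).1.le)
            (fun c hc => hβ c (Finset.mem_union_right _ hc)) (hC₂span huB₂)
          rwa [abs_of_nonneg hu.le] at h1
        have hrB : r ∈ B := by
          rw [hr]
          exact vl_sub_mem hB hxB (vl_sum_mem hB fun c hc => hB.2.2.1 _ _ (hCB hc))
        have hrB₁ : r ∈ B₁ := ⟨hrB, by
          rw [VLdComp, mem_setOf_eq, abs_of_nonneg hrpos]; exact hru⟩
        have hr0 : r = 0 := by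
          have h1 : r ⊓ |r| = 0 := vl_span_disj hrpos (fun c hc => (hC₁atom c hc).1.le)
            (fun c hc => hβ c (Finset.mem_union_left _ hc)) (hC₁span hrB₁)
          rwa [abs_of_nonneg hrpos, inf_idem] at h1
        have hxsum : x = ∑ c ∈ C, vlCoeff c x • c := by
          have := sub_eq_zero.mp hr0
          exact this
        rw [hxsum]
        exact Submodule.sum_mem _ fun c hc =>
          Submodule.smul_mem _ _ (Submodule.subset_span (Finset.mem_coe.2 hc))
      intro y hy
      have h1 := hspan_pos _ (vl_posPart_mem hB hy) (posPart_nonneg y)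
      have h2 := hspan_pos _ (vl_negPart_mem hB hy) (negPart_nonneg y)
      have : y = y⁺ - y⁻ := (posPart_sub_negPart y).symm
      rw [this]
      exact Submodule.sub_mem _ h1 h2
    · -- no disjoint pair : use the Hölder lemma
      push_neg at hpair
      exact vl_holder hArch hB (fun x hx y hy hx0 hy0 => hpair x hx y hy hx0 hy0)
end VLSpan

section VLSeq

/-- `B` admits disjoint families of arbitrarily large size. -/
def VLUnb (B : Set X) : Prop := ∀ k : ℕ, ∃ F : Finset X, VLFam B F ∧ k ≤ F.card

lemma vl_inf_nonneg {x y : X} (hx : 0 ≤ x) (hy : 0 ≤ y) : 0 ≤ x ⊓ y := le_inf hx hy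

lemma vl_step {B : Set X} (hB : VLIdeal B) (hunb : VLUnb B) :
    ∃ b : X, 0 < b ∧ b ∈ B ∧ VLIdeal (B ∩ VLdComp b) ∧ VLUnb (B ∩ VLdComp b) := by
  classical
  obtain ⟨F₂, hF₂, hcard₂⟩ := hunb 2
  obtain ⟨u, huF, v, hvF, huv⟩ := Finset.one_lt_card.mp
    (show 1 < F₂.card by omega)
  have hu : 0 < u := hF₂.2.1 u huF
  have hv : 0 < v := hF₂.2.1 v hvF
  have huB : u ∈ B := hF₂.1 huF
  have hvB : v ∈ B := hF₂.1 hvF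
  have hdisj : u ⊓ v = 0 := hF₂.2.2 u huF v hvF huv
  have key : ∀ k : ℕ, (∃ F, VLFam (B ∩ VLdComp u) F ∧ k ≤ F.card) ∨
      (∃ F, VLFam (B ∩ VLdComp v) F ∧ k ≤ F.card) := by
    intro k
    obtain ⟨F, hF, hcard⟩ := hunb (2 * k)
    set G := F.filter (fun x => x ⊓ u = 0) with hG
    set H := F.filter (fun x => ¬ x ⊓ u = 0) with hH
    have hcards : G.card + H.card = F.card :=
      Finset.card_filter_add_card_filter_not _
    have hGH : k ≤ G.card ∨ k ≤ H.card := by omega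
    rcases hGH with hk | hk
    · left
      refine ⟨G, ⟨?_, ?_, ?_⟩, hk⟩
      · intro x hx
        rw [Finset.mem_coe, hG, Finset.mem_filter] at hx
        refine ⟨hF.1 hx.1, ?_⟩
        rw [VLdComp, mem_setOf_eq, abs_of_nonneg (hF.2.1 x hx.1).le]
        exact hx.2
      · intro x hx
        exact hF.2.1 x (Finset.mem_of_mem_filter x hx)
      · intro x hx y hy hne
        exact hF.2.2 x (Finset.mem_of_mem_filter x hx) y (Finset.mem_of_mem_filter y hy) hne
    · right
      have hmemH : ∀ x ∈ H, x ∈ F ∧ ¬ x ⊓ u = 0 := by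
        intro x hx
        rwa [hH, Finset.mem_filter] at hx
      have hpairH : ∀ x ∈ H, ∀ y ∈ H, x ≠ y → (x ⊓ u) ⊓ (y ⊓ u) = 0 := by
        intro x hx y hy hne
        have h0 : x ⊓ y = 0 := hF.2.2 x (hmemH x hx).1 y (hmemH y hy).1 hne
        refine le_antisymm ?_ (vl_inf_nonneg
          (vl_inf_nonneg (hF.2.1 x (hmemH x hx).1).le hu.le)
          (vl_inf_nonneg (hF.2.1 y (hmemH y hy).1).le hu.le))
        calc (x ⊓ u) ⊓ (y ⊓ u) ≤ x ⊓ y := inf_le_inf inf_le_left inf_le_left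
          _ = 0 := h0
      have hinj : Set.InjOn (fun x => x ⊓ u) ↑H := by
        intro x hx y hy hxy
        by_contra hne
        have h1 := hpairH x (Finset.mem_coe.1 hx) y (Finset.mem_coe.1 hy) hne
        simp only at hxy
        rw [hxy, inf_idem] at h1
        exact (hmemH y (Finset.mem_coe.1 hy)).2 h1
      refine ⟨H.image (fun x => x ⊓ u), ⟨?_, ?_, ?_⟩, ?_⟩
      · intro z hz
        rw [Finset.mem_coe, Finset.mem_image] at hz
        obtain ⟨x, hx, rfl⟩ := hz
        have hxF := (hmemH x hx).1
        constructor
        · refine hB.2.2.2 (hF.1 hxF) ?_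
          rw [abs_of_nonneg (vl_inf_nonneg (hF.2.1 x hxF).le hu.le),
            abs_of_nonneg (hF.2.1 x hxF).le]
          exact inf_le_left
        · rw [VLdComp, mem_setOf_eq, abs_of_nonneg (vl_inf_nonneg (hF.2.1 x hxF).le hu.le)]
          refine le_antisymm ?_ (vl_inf_nonneg (vl_inf_nonneg (hF.2.1 x hxF).le hu.le) hv.le)
          calc (x ⊓ u) ⊓ v ≤ u ⊓ v := inf_le_inf inf_le_right le_rfl
            _ = 0 := hdisj
      · intro z hz
        rw [Finset.mem_image] at hz
        obtain ⟨x, hx, rfl⟩ := hz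
        have h1 : 0 ≤ x ⊓ u := vl_inf_nonneg (hF.2.1 x (hmemH x hx).1).le hu.le
        exact h1.lt_of_ne' (hmemH x hx).2
      · intro z hz z' hz' hne
        rw [Finset.mem_image] at hz hz'
        obtain ⟨x, hx, rfl⟩ := hz
        obtain ⟨y, hy, rfl⟩ := hz'
        exact hpairH x hx y hy (fun hxy => hne (by rw [hxy]))
      · rw [Finset.card_image_of_injOn hinj]
        exact hk
  by_cases hcase : ∀ k : ℕ, ∃ F, VLFam (B ∩ VLdComp u) F ∧ k ≤ F.card
  · exact ⟨u, hu, huB, vl_ideal_dComp hB hu.le, hcase⟩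
  · push_neg at hcase
    obtain ⟨k₀, hk₀⟩ := hcase
    refine ⟨v, hv, hvB, vl_ideal_dComp hB hv.le, fun k => ?_⟩
    rcases key (max k k₀) with ⟨F, hF, hcard⟩ | ⟨F, hF, hcard⟩
    · exfalso
      have := hk₀ F hF; have h2 := le_trans (le_max_right k k₀) hcard; omega
    · exact ⟨F, hF, le_trans (le_max_left k k₀) hcard⟩

lemma vl_disjseq (hunb : VLUnb (univ : Set X)) :
    ∃ e : ℕ → X, (∀ n, 0 < e n) ∧ ∀ m n, m ≠ n → e m ⊓ e n = 0 := by
  classical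
  set P : Set X → Prop := fun B => VLIdeal B ∧ VLUnb B with hP
  have hstep : ∀ B : Set X, P B → ∃ b : X, 0 < b ∧ b ∈ B ∧ P (B ∩ VLdComp b) := by
    intro B hB
    obtain ⟨b, hb1, hb2, hb3, hb4⟩ := vl_step hB.1 hB.2
    exact ⟨b, hb1, hb2, hb3, hb4⟩
  -- choice function
  have hP0 : P univ := ⟨vl_ideal_univ, hunb⟩
  let g : ℕ → {B : Set X // P B} := fun n => Nat.rec ⟨univ, hP0⟩
    (fun _ p => ⟨p.1 ∩ VLdComp (Classical.choose (hstep p.1 p.2)),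
      (Classical.choose_spec (hstep p.1 p.2)).2.2⟩) n
  let e : ℕ → X := fun n => Classical.choose (hstep (g n).1 (g n).2)
  have he_pos : ∀ n, 0 < e n := fun n => (Classical.choose_spec (hstep (g n).1 (g n).2)).1
  have he_mem : ∀ n, e n ∈ (g n).1 := fun n =>
    (Classical.choose_spec (hstep (g n).1 (g n).2)).2.1
  have hg_succ : ∀ n, (g (n+1)).1 = (g n).1 ∩ VLdComp (e n) := fun n => rfl
  have hg_mono : ∀ n m, n ≤ m → (g m).1 ⊆ (g n).1 := by
    intro n m hnm
    induction m with
    | zero =>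
      have : n = 0 := Nat.le_zero.mp hnm
      rw [this]
    | succ m ih =>
      rcases Nat.lt_or_ge n (m+1) with h | h
      · have h1 : (g (m+1)).1 ⊆ (g m).1 := by
          rw [hg_succ m]
          exact inter_subset_left
        exact h1.trans (ih (Nat.lt_succ_iff.mp h))
      · have : n = m + 1 := le_antisymm hnm h
        rw [this]
  have hkey : ∀ n m, n < m → e m ⊓ e n = 0 := by
    intro n m hnm
    have h1 : e m ∈ (g (n+1)).1 := hg_mono (n+1) m hnm (he_mem m)
    rw [hg_succ n] at h1
    have h2 : |e m| ⊓ e n = 0 := h1.2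
    rwa [abs_of_nonneg (he_pos m).le] at h2
  refine ⟨e, he_pos, fun m n hmn => ?_⟩
  rcases Nat.lt_or_ge m n with h | h
  · rw [inf_comm]
    exact hkey m n h
  · exact hkey n m (lt_of_le_of_ne h (Ne.symm hmn))

lemma vl_findim_or_seq (hArch : VLArchimedean X) :
    FiniteDimensional ℝ X ∨
      ∃ e : ℕ → X, (∀ n, 0 < e n) ∧ ∀ m n, m ≠ n → e m ⊓ e n = 0 := by
  classical
  by_cases h : ∃ k : ℕ, ∀ F : Finset X, VLFam (univ : Set X) F → F.card ≤ k
  · left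
    obtain ⟨k, hk⟩ := h
    obtain ⟨C, _, _, _, hspan⟩ := vl_span_of_bdd hArch k univ vl_ideal_univ hk
    have htop : Submodule.span ℝ (↑C : Set X) = ⊤ := by
      rw [Submodule.eq_top_iff']
      intro x
      exact hspan (mem_univ x)
    exact ⟨⟨C, htop⟩⟩
  · right
    push_neg at h
    refine vl_disjseq (fun k => ?_)
    obtain ⟨F, hF, hcard⟩ := h k
    exact ⟨F, hF, by omega⟩

end VLSeq

section VLTop

/-- solid sets absorb nonnegative elements below a member -/
lemma vl_solid_mem_of_le {U : Set X} (hU : IsSolid U) {y z : X} (hy : y ∈ U)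
    (hz : 0 ≤ z) (hzy : z ≤ y) : z ∈ U :=
  hU hy (by rw [abs_of_nonneg hz, abs_of_nonneg (hz.trans hzy)]; exact hzy)

/-- the easy direction: finite dimensional ⇒ locally bounded -/
lemma vl_findim_locally_bounded (τ : TopologicalSpace X) (hadd : @IsTopologicalAddGroup X τ _)
    (hsmul : @ContinuousSMul ℝ X _ _ τ) (ht2 : @T2Space X τ) (hfd : FiniteDimensional ℝ X) :
    LocallyBoundedTop τ := by
  letI := τ
  haveI := hadd
  haveI := hsmul
  haveI := ht2
  haveI := hfd
  set n := Module.finrank ℝ X with hn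
  let b : Module.Basis (Fin n) ℝ X := Module.finBasis ℝ X
  let L : X ≃ₗ[ℝ] (Fin n → ℝ) := b.equivFun
  have hL : Continuous (L : X →ₗ[ℝ] (Fin n → ℝ)) := LinearMap.continuous_of_finiteDimensional _
  have hLsymm : Continuous (L.symm : (Fin n → ℝ) →ₗ[ℝ] X) :=
    LinearMap.continuous_of_finiteDimensional _
  refine ⟨(fun x => L x) ⁻¹' Metric.ball 0 1, ?_, ?_⟩
  · refine hL.continuousAt.preimage_mem_nhds ?_
    rw [show (L : X →ₗ[ℝ] (Fin n → ℝ)) 0 = 0 from map_zero _]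
    exact Metric.ball_mem_nhds _ one_pos
  · intro U hU
    have hpre : (fun w => L.symm w) ⁻¹' U ∈ 𝓝 (0 : Fin n → ℝ) := by
      refine hLsymm.continuousAt.preimage_mem_nhds ?_
      rw [show (L.symm : (Fin n → ℝ) →ₗ[ℝ] X) 0 = 0 from map_zero _]
      exact hU
    obtain ⟨ε, hε, hball⟩ := Metric.mem_nhds_iff.mp hpre
    refine ⟨ε/2, by positivity, fun x hx => ?_⟩
    have hx' : ‖L x‖ < 1 := by
      have := hx
      rwa [Set.mem_preimage, mem_ball_zero_iff] at this
    have hmem : L ((ε/2) • x) ∈ Metric.ball (0 : Fin n → ℝ) ε := by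
      rw [map_smul, mem_ball_zero_iff, norm_smul]
      have h1 : ‖(ε/2 : ℝ)‖ = ε/2 := by
        rw [Real.norm_eq_abs, abs_of_pos (by positivity)]
      rw [h1]
      calc ε/2 * ‖L x‖ ≤ ε/2 * 1 := by nlinarith [norm_nonneg (L x)]
        _ < ε := by linarith
    have := hball hmem
    rwa [Set.mem_preimage, LinearEquiv.symm_apply_apply] at this

end VLTop

section VLHard

lemma vl_hard (hArch : VLArchimedean X) (τ : TopologicalSpace X) (hmin : IsMinimalTop τ)
    (hlb : LocallyBoundedTop τ) : FiniteDimensional ℝ X := by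
  classical
  rcases vl_findim_or_seq hArch with hfd | ⟨e, hepos, hedisj⟩
  · exact hfd
  exfalso
  obtain ⟨⟨hadd, hsmul, hsolid⟩, ht2, hminimal⟩ := hmin
  letI := τ
  haveI := hadd
  haveI := hsmul
  haveI := ht2
  -- the ideal of eventually-disjoint elements
  set A : Set X := {x : X | ∃ N : ℕ, ∀ n, N ≤ n → |x| ⊓ e n = 0} with hA
  set D : Set X := {a ∈ A | 0 ≤ a} with hD
  have hD0 : (0:X) ∈ D := ⟨⟨0, fun n _ => by rw [abs_zero, vl_zero_inf (hepos n).le]⟩, le_rfl⟩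
  have hDadd : ∀ a ∈ D, ∀ b ∈ D, a + b ∈ D := by
    rintro a ⟨⟨Na, hNa⟩, ha0⟩ b ⟨⟨Nb, hNb⟩, hb0⟩
    refine ⟨⟨max Na Nb, fun n hn => ?_⟩, add_nonneg ha0 hb0⟩
    have h1 : |a + b| ⊓ e n ≤ (|a| + |b|) ⊓ e n := inf_le_inf_right _ (abs_add_le a b)
    have h2 : (|a| + |b|) ⊓ e n = 0 := vl_disj_add (hepos n).le (abs_nonneg a) (abs_nonneg b)
      (hNa n (le_trans (le_max_left _ _) hn)) (hNb n (le_trans (le_max_right _ _) hn))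
    exact le_antisymm (h1.trans_eq h2) (le_inf (abs_nonneg _) (hepos n).le)
  -- basic sets of the coarser topology
  set NN : X → Set X → Set X := fun a U => {x : X | |x| ⊓ a ∈ U} with hNN
  set sets : Set (Set X) := {S | ∃ a ∈ D, ∃ U : Set X, U ∈ 𝓝 (0:X) ∧ IsSolid U ∧ S = NN a U}
    with hsets
  have hbasic_solid : ∀ S ∈ sets, IsSolid S := by
    rintro S ⟨a, haD, U, hU, hUsolid, rfl⟩
    intro x y hx hxy
    have h1 : |y| ⊓ a ≤ |x| ⊓ a := inf_le_inf_right a hxy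
    exact vl_solid_mem_of_le hUsolid hx (le_inf (abs_nonneg y) haD.2) h1
  have hzero_mem : ∀ S ∈ sets, (0:X) ∈ S := by
    rintro S ⟨a, haD, U, hU, hUsolid, rfl⟩
    show |(0:X)| ⊓ a ∈ U
    rw [abs_zero, vl_zero_inf haD.2]
    exact mem_of_mem_nhds hU
  -- basic sets are τ-neighbourhoods of 0
  have hbasic_nhds : ∀ S ∈ sets, S ∈ 𝓝 (0:X) := by
    rintro S ⟨a, haD, U, hU, hUsolid, rfl⟩
    obtain ⟨W, hW, hWsolid, hWU⟩ := hsolid U hU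
    refine mem_of_superset hW ?_
    intro x hx
    show |x| ⊓ a ∈ U
    refine hWU (hWsolid hx ?_)
    rw [abs_of_nonneg (le_inf (abs_nonneg x) haD.2)]
    exact inf_le_left
  -- the module filter basis
  have hFBsets : sets.Nonempty := ⟨NN 0 univ, 0, hD0, univ, univ_mem,
    fun x y _ _ => trivial, rfl⟩
  have hinter : ∀ S₁ ∈ sets, ∀ S₂ ∈ sets, ∃ S ∈ sets, S ⊆ S₁ ∩ S₂ := by
    rintro S₁ ⟨a, haD, U, hU, hUsolid, rfl⟩ S₂ ⟨b, hbD, V, hV, hVsolid, rfl⟩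
    obtain ⟨W, hW, hWsolid, hWUV⟩ := hsolid (U ∩ V) (inter_mem hU hV)
    refine ⟨NN (a+b) W, ⟨a+b, hDadd a haD b hbD, W, hW, hWsolid, rfl⟩, ?_⟩
    intro x hx
    have hx' : |x| ⊓ (a+b) ∈ W := hx
    have hab : 0 ≤ a + b := add_nonneg haD.2 hbD.2
    constructor
    · show |x| ⊓ a ∈ U
      refine (hWUV (vl_solid_mem_of_le hWsolid hx' (le_inf (abs_nonneg x) haD.2) ?_)).1
      exact inf_le_inf_left _ (le_add_of_nonneg_right hbD.2)
    · show |x| ⊓ b ∈ V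
      refine (hWUV (vl_solid_mem_of_le hWsolid hx' (le_inf (abs_nonneg x) hbD.2) ?_)).2
      exact inf_le_inf_left _ (le_add_of_nonneg_left haD.2)
  let FB : ModuleFilterBasis ℝ X :=
  { sets := sets
    nonempty := hFBsets
    inter_sets := by
      intro S₁ S₂ h₁ h₂
      obtain ⟨S, hS, hsub⟩ := hinter S₁ h₁ S₂ h₂
      exact ⟨S, hS, hsub⟩
    zero' := fun {S} hS => hzero_mem S hS
    add' := by
      rintro S ⟨a, haD, U, hU, hUsolid, rfl⟩
      obtain ⟨W, hW, hWhalf⟩ := exists_nhds_zero_half hU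
      obtain ⟨W', hW', hW'solid, hW'W⟩ := hsolid W hW
      refine ⟨NN a W', ⟨a, haD, W', hW', hW'solid, rfl⟩, ?_⟩
      rw [Set.add_subset_iff]
      intro x hx y hy
      have hx' : |x| ⊓ a ∈ W' := hx
      have hy' : |y| ⊓ a ∈ W' := hy
      show |x + y| ⊓ a ∈ U
      have hsum : (|x| ⊓ a) + (|y| ⊓ a) ∈ U :=
        hWhalf _ (hW'W hx') _ (hW'W hy')
      refine vl_solid_mem_of_le hUsolid hsum (le_inf (abs_nonneg _) haD.2) ?_
      calc |x + y| ⊓ a ≤ (|x| + |y|) ⊓ a := inf_le_inf_right _ (abs_add_le x y)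
        _ ≤ |x| ⊓ a + |y| ⊓ a := vl_riesz (abs_nonneg x) (abs_nonneg y) haD.2
    neg' := by
      rintro S ⟨a, haD, U, hU, hUsolid, rfl⟩
      refine ⟨NN a U, ⟨a, haD, U, hU, hUsolid, rfl⟩, ?_⟩
      intro x hx
      show |(-x)| ⊓ a ∈ U
      rw [abs_neg]
      exact hx
    conj' := by
      intro x₀ S hS
      refine ⟨S, hS, ?_⟩
      intro x hx
      show x₀ + x + -x₀ ∈ S
      rw [show x₀ + x + -x₀ = x by abel]
      exact hx
    smul' := by
      rintro S ⟨a, haD, U, hU, hUsolid, rfl⟩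
      refine ⟨Metric.ball (0:ℝ) 1, Metric.ball_mem_nhds _ one_pos,
        NN a U, ⟨a, haD, U, hU, hUsolid, rfl⟩, ?_⟩
      intro z hz
      rw [Set.mem_smul] at hz
      obtain ⟨c, hc, x, hx, rfl⟩ := hz
      have hc1 : |c| ≤ 1 := by
        rw [mem_ball_zero_iff, Real.norm_eq_abs] at hc
        exact hc.le
      have hx' : |x| ⊓ a ∈ U := hx
      show |c • x| ⊓ a ∈ U
      refine vl_solid_mem_of_le hUsolid hx' (le_inf (abs_nonneg _) haD.2) ?_
      refine inf_le_inf_right a ?_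
      rw [vl_abs_smul]
      calc |c| • |x| ≤ (1:ℝ) • |x| := vl_smul_mono_scalar hc1 (abs_nonneg x)
        _ = |x| := one_smul _ _
    smul_left' := by
      rintro c S ⟨a, haD, U, hU, hUsolid, rfl⟩
      set m : ℝ := max |c| 1 with hm
      have hm1 : (1:ℝ) ≤ m := le_max_right _ _
      have hmpos : (0:ℝ) < m := lt_of_lt_of_le one_pos hm1
      have hcont : Continuous fun x : X => m • x := continuous_const_smul m
      have hpre : (fun x : X => m • x) ⁻¹' U ∈ 𝓝 (0:X) := by
        refine hcont.continuousAt.preimage_mem_nhds ?_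
        rw [show m • (0:X) = 0 from smul_zero m]
        exact hU
      obtain ⟨U', hU', hU'solid, hU'pre⟩ := hsolid _ hpre
      refine ⟨NN a U', ⟨a, haD, U', hU', hU'solid, rfl⟩, ?_⟩
      intro x hx
      have hx' : |x| ⊓ a ∈ U' := hx
      have hmx : m • (|x| ⊓ a) ∈ U := hU'pre hx'
      show |c • x| ⊓ a ∈ U
      refine vl_solid_mem_of_le hUsolid hmx
        (le_inf (abs_nonneg _) haD.2) ?_
      calc |c • x| ⊓ a = (|c| • |x|) ⊓ a := by rw [vl_abs_smul]
        _ ≤ (m • |x|) ⊓ (m • a) := inf_le_inf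
            (vl_smul_mono_scalar (le_max_left _ _) (abs_nonneg x))
            (by calc a = (1:ℝ) • a := (one_smul _ _).symm
                  _ ≤ m • a := vl_smul_mono_scalar hm1 haD.2)
        _ = m • (|x| ⊓ a) := (vl_smul_inf hmpos _ _).symm
    smul_right' := by
      rintro x₀ S ⟨a, haD, U, hU, hUsolid, rfl⟩
      have hcont : Continuous fun c : ℝ => |c| • |x₀| :=
        (continuous_abs).smul continuous_const
      have htend : Filter.Tendsto (fun c : ℝ => |c| • |x₀|) (𝓝 0) (𝓝 (0:X)) := by
        have := hcont.continuousAt (x := (0:ℝ))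
        rwa [ContinuousAt, abs_zero, zero_smul] at this
      filter_upwards [htend hU] with c hc
      show |c • x₀| ⊓ a ∈ U
      refine vl_solid_mem_of_le hUsolid hc (le_inf (abs_nonneg _) haD.2) ?_
      rw [vl_abs_smul]
      exact inf_le_left }
  have hσadd : @IsTopologicalAddGroup X FB.topology _ :=
    FB.toAddGroupFilterBasis.isTopologicalAddGroup
  have hσsmul : @ContinuousSMul ℝ X _ _ FB.topology := FB.continuousSMul
  have hσnhds : @nhds X FB.topology 0 = FB.toAddGroupFilterBasis.toFilterBasis.filter :=
    FB.toAddGroupFilterBasis.nhds_zero_eq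
  -- σ is locally solid
  have hσls : IsLocallySolidTop (X := X) FB.topology := by
    refine ⟨hσadd, hσsmul, ?_⟩
    intro U hU
    rw [hσnhds, FilterBasis.mem_filter_iff] at hU
    obtain ⟨S, hS, hSU⟩ := hU
    refine ⟨S, ?_, hbasic_solid S hS, hSU⟩
    rw [hσnhds]
    exact FB.toAddGroupFilterBasis.toFilterBasis.mem_filter_of_mem hS
  -- σ is Hausdorff
  have hσt2 : @T2Space X FB.topology := by
    refine @IsTopologicalAddGroup.t2Space_of_zero_sep X FB.topology _ hσadd ?_
    intro x hx
    -- find y ∈ D not disjoint from x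
    have hy : ∃ y ∈ D, 0 < y ∧ |x| ⊓ y ≠ 0 := by
      by_cases hcase : ∃ n, |x| ⊓ e n ≠ 0
      · obtain ⟨n, hn⟩ := hcase
        refine ⟨e n, ⟨⟨n+1, fun m hm => ?_⟩, (hepos n).le⟩, hepos n, hn⟩
        rw [abs_of_nonneg (hepos n).le]
        exact hedisj n m (by omega)
      · push_neg at hcase
        refine ⟨|x|, ⟨⟨0, fun m _ => by rw [abs_abs]; exact hcase m⟩, abs_nonneg x⟩,
          vl_abs_pos hx, ?_⟩
        rw [inf_idem]
        exact fun h => hx (vl_abs_eq_zero h)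
    obtain ⟨y, hyD, hypos, hxy⟩ := hy
    have hzU : ∃ U : Set X, U ∈ @nhds X τ 0 ∧ IsSolid U ∧ |x| ⊓ y ∉ U := by
      have hop : ({|x| ⊓ y}ᶜ : Set X) ∈ @nhds X τ 0 := by
        refine IsOpen.mem_nhds isOpen_compl_singleton ?_
        simp only [mem_compl_iff, mem_singleton_iff]
        exact fun h => hxy (h.symm)
      obtain ⟨U, hU, hUsolid, hUsub⟩ := hsolid _ hop
      exact ⟨U, hU, hUsolid, fun hzu => (hUsub hzu) rfl⟩
    obtain ⟨U, hU, hUsolid, hzU⟩ := hzU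
    refine ⟨NN y U, ?_, ?_⟩
    · rw [hσnhds]
      exact FB.toAddGroupFilterBasis.toFilterBasis.mem_filter_of_mem
        ⟨y, hyD, U, hU, hUsolid, rfl⟩
    · intro hmem
      exact hzU hmem
  -- τ is finer
  have hτσ : τ ≤ FB.topology := by
    rw [le_iff_nhds]
    intro x
    have h0 : @nhds X τ 0 ≤ FB.toAddGroupFilterBasis.toFilterBasis.filter := by
      intro s hs
      rw [FilterBasis.mem_filter_iff] at hs
      obtain ⟨S, hS, hSs⟩ := hs
      exact mem_of_superset (hbasic_nhds S hS) hSs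
    have h1 : @nhds X FB.topology x
        = Filter.map (x + ·) FB.toAddGroupFilterBasis.toFilterBasis.filter := by
      rw [FB.toAddGroupFilterBasis.nhds_eq]
      rfl
    rw [h1, ← map_add_left_nhds_zero x]
    exact Filter.map_mono h0
  -- minimality
  have hστ : FB.topology = τ := hminimal FB.topology hσls hσt2 hτσ
  -- conclusion
  obtain ⟨V, hV, hVbd⟩ := hlb
  have hVσ : V ∈ @nhds X FB.topology 0 := by rw [hστ]; exact hV
  rw [hσnhds, FilterBasis.mem_filter_iff] at hVσ
  obtain ⟨S, hS, hSV⟩ := hVσ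
  obtain ⟨a, haD, U, hU, hUsolid, rfl⟩ := hS
  obtain ⟨⟨N, hN⟩, ha0⟩ := haD
  have haeN : |a| ⊓ e N = 0 := hN N le_rfl
  have heNa : |e N| ⊓ a = 0 := by
    rw [abs_of_nonneg (hepos N).le, inf_comm]
    rwa [abs_of_nonneg ha0] at haeN
  have hline : ∀ c : ℝ, c • e N ∈ V := by
    intro c
    refine hSV ?_
    show |c • e N| ⊓ a ∈ U
    rw [vl_abs_disj_smul ha0 heNa c]
    exact mem_of_mem_nhds hU
  have heN_all : ∀ U' ∈ @nhds X τ 0, e N ∈ U' := by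
    intro U' hU'
    obtain ⟨l, hl, hbd⟩ := hVbd U' hU'
    have := hbd _ (hline l⁻¹)
    rwa [smul_inv_smul₀ hl.ne'] at this
  have hcompl : ({e N}ᶜ : Set X) ∈ @nhds X τ 0 := by
    refine IsOpen.mem_nhds isOpen_compl_singleton ?_
    simp only [mem_compl_iff, mem_singleton_iff]
    exact fun h => (hepos N).ne' h.symm
  exact (heN_all _ hcompl) rfl

end VLHard


/-- a minimal topology is locally bounded iff `X` is finite
dimensional. -/
theorem stmt15 (hArch : VLArchimedean X) (τ : TopologicalSpace X) (hmin : IsMinimalTop τ) :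
    LocallyBoundedTop τ ↔ FiniteDimensional ℝ X := by
  constructor
  · exact fun hlb => vl_hard hArch τ hmin hlb
  · exact fun hfd => vl_findim_locally_bounded τ hmin.1.1 hmin.1.2.1 hmin.2.1 hfd
end

section
/- Let (Ω,Σ,μ) be a semi-finite measure space. Then the vector lattice L_0(μ) of μ-a.e. equivalence classes of real-valued measurable functions on Ω, ordered a.e. pointwise, has the countable sup property if and only if μ is σ-finite. -/
open Filter Set Topology ENNReal

variable {X : Type*} [Lattice X] [AddCommGroup X] [Module ℝ X]
  [CovariantClass X X (· + ·) (· ≤ ·)] [PosSMulMono ℝ X]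

open MeasureTheory in
private theorem stmt17_aux_integrable {Ω : Type*} [MeasurableSpace Ω] (ν : Measure Ω)
    [IsFiniteMeasure ν] (h : Ω → ℝ) (hh : Measurable h) :
    Integrable (fun ω => Real.arctan (h ω)) ν := by
  refine (integrable_const (Real.pi / 2)).mono'
    (Real.continuous_arctan.measurable.comp hh).aestronglyMeasurable ?_
  refine Filter.Eventually.of_forall fun ω => ?_
  rw [Real.norm_eq_abs, abs_le]
  exact ⟨(Real.neg_pi_div_two_lt_arctan _).le, (Real.arctan_lt_pi_div_two _).le⟩

open MeasureTheory in
private theorem stmt17_backward {Ω : Type*} [MeasurableSpace Ω] (μ : Measure Ω)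
    [SigmaFinite μ] : CountableSupProperty (Ω →ₘ[μ] ℝ) := by
  classical
  obtain ⟨ν, hνfin, hμν, hνμ⟩ := exists_isFiniteMeasure_absolutelyContinuous μ
  haveI := hνfin
  intro S x hne hlub
  have hae₁ : ∀ {p : Ω → Prop}, (∀ᵐ ω ∂μ, p ω) → (∀ᵐ ω ∂ν, p ω) :=
    fun h => h.filter_mono hνμ.ae_le
  have hae₂ : ∀ {p : Ω → Prop}, (∀ᵐ ω ∂ν, p ω) → (∀ᵐ ω ∂μ, p ω) :=
    fun h => h.filter_mono hμν.ae_le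
  set I : (Ω →ₘ[μ] ℝ) → ℝ := fun f => ∫ ω, Real.arctan (f ω) ∂ν with hIdef
  have hIint : ∀ f : Ω →ₘ[μ] ℝ, Integrable (fun ω => Real.arctan (f ω)) ν :=
    fun f => stmt17_aux_integrable ν _ f.measurable
  have hImono : ∀ {f g : Ω →ₘ[μ] ℝ}, f ≤ g → I f ≤ I g := by
    intro f g hfg
    refine integral_mono_ae (hIint f) (hIint g) ?_
    filter_upwards [hae₁ (MeasureTheory.AEEqFun.coeFn_le.2 hfg)] with ω hω
    exact Real.arctan_strictMono.monotone hω
  set T : Set (Ω →ₘ[μ] ℝ) :=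
    {f | ∃ F : Finset (Ω →ₘ[μ] ℝ), ∃ hF : F.Nonempty, ↑F ⊆ S ∧ f = F.sup' hF id} with hTdef
  obtain ⟨s₀, hs₀⟩ := hne
  have hs₀T : s₀ ∈ T := ⟨{s₀}, Finset.singleton_nonempty _, by simpa using hs₀, by simp⟩
  have hTne : (I '' T).Nonempty := ⟨I s₀, s₀, hs₀T, rfl⟩
  have hTle : ∀ f ∈ T, f ≤ x := by
    rintro f ⟨F, hF, hFS, rfl⟩
    exact Finset.sup'_le _ _ fun b hb => hlub.1 (hFS hb)
  have hbdd : BddAbove (I '' T) := ⟨I x, by rintro _ ⟨f, hf, rfl⟩; exact hImono (hTle f hf)⟩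
  set M := sSup (I '' T) with hMdef
  have hchoice : ∀ n : ℕ, ∃ F : Finset (Ω →ₘ[μ] ℝ), ∃ hF : F.Nonempty, ↑F ⊆ S ∧
      M - 1/(n+1) < I (F.sup' hF id) := by
    intro n
    have hpos : (0:ℝ) < 1/(n+1) := by positivity
    have h1 : M - 1/(n+1) < M := by linarith
    obtain ⟨y, ⟨f, hfT, rfl⟩, hy⟩ := exists_lt_of_lt_csSup hTne h1
    obtain ⟨F, hF, hFS, rfl⟩ := hfT
    exact ⟨F, hF, hFS, hy⟩
  choose G hGne hGS hGlt using hchoice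
  set F : ℕ → Finset (Ω →ₘ[μ] ℝ) := fun n => (Finset.range (n+1)).biUnion G with hFdef
  have hGF : ∀ n, G n ⊆ F n := by
    intro n a ha
    exact Finset.mem_biUnion.2 ⟨n, Finset.self_mem_range_succ n, ha⟩
  have hFne : ∀ n, (F n).Nonempty := by
    intro n
    obtain ⟨a, ha⟩ := hGne n
    exact ⟨a, hGF n ha⟩
  have hFS : ∀ n, ↑(F n) ⊆ S := by
    intro n c hc
    obtain ⟨k, _, hk⟩ := Finset.mem_biUnion.1 hc
    exact hGS k hk
  set g : ℕ → (Ω →ₘ[μ] ℝ) := fun n => (F n).sup' (hFne n) id with hgdef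
  have hgT : ∀ n, g n ∈ T := fun n => ⟨F n, hFne n, hFS n, rfl⟩
  have hgM : ∀ n, I (g n) ≤ M := fun n => le_csSup hbdd ⟨g n, hgT n, rfl⟩
  have hglt : ∀ n, M - 1/(n+1) < I (g n) := by
    intro n
    refine lt_of_lt_of_le (hGlt n) (hImono ?_)
    exact Finset.sup'_le _ _ fun b hb => Finset.le_sup' id (hGF n hb)
  refine ⟨⋃ n, (↑(F n) : Set (Ω →ₘ[μ] ℝ)), Set.iUnion_subset fun n => hFS n,
    Set.countable_iUnion fun n => (F n).countable_toSet, ?_, ?_⟩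
  · intro c hc
    exact hlub.1 ((Set.iUnion_subset fun n => hFS n) hc)
  · intro b hb
    refine hlub.2 ?_
    intro s hs
    have hgb : ∀ n, g n ≤ b := fun n =>
      Finset.sup'_le _ _ fun c hc => hb (Set.mem_iUnion.2 ⟨n, hc⟩)
    set d : ℕ → Ω → ℝ := fun n ω => Real.arctan (max (g n ω) (s ω)) - Real.arctan (g n ω)
      with hddef
    have hdmeas : ∀ n, Measurable (fun ω => max ((g n) ω) (s ω)) :=
      fun n => (g n).measurable.max s.measurable
    have hdint : ∀ n, Integrable (d n) ν :=
      fun n => (stmt17_aux_integrable ν _ (hdmeas n)).sub (hIint (g n))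
    have hdnonneg : ∀ n ω, 0 ≤ d n ω := fun n ω =>
      sub_nonneg.2 (Real.arctan_strictMono.monotone (le_max_left _ _))
    have hsupT : ∀ n, g n ⊔ s ∈ T := by
      intro n
      refine ⟨insert s (F n), Finset.insert_nonempty _ _, ?_, ?_⟩
      · intro c hc
        rcases Finset.mem_insert.1 hc with rfl | hc
        · exact hs
        · exact hFS n hc
      · rw [Finset.sup'_insert]
        exact sup_comm _ _
    have hdI : ∀ n, ∫ ω, d n ω ∂ν = I (g n ⊔ s) - I (g n) := by
      intro n
      rw [hddef]
      rw [integral_sub (stmt17_aux_integrable ν _ (hdmeas n)) (hIint (g n))]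
      congr 1
      refine integral_congr_ae ?_
      filter_upwards [hae₁ (MeasureTheory.AEEqFun.coeFn_sup (g n) s)] with ω hω
      rw [hω]
    have hdsmall : ∀ n, ∫ ω, d n ω ∂ν < 1/(n+1) := by
      intro n
      have h1 : I (g n ⊔ s) ≤ M := le_csSup hbdd ⟨g n ⊔ s, hsupT n, rfl⟩
      have h2 := hglt n
      rw [hdI n]
      linarith
    have hdnn : ∀ n, (0:ℝ) ≤ ∫ ω, d n ω ∂ν := fun n =>
      integral_nonneg fun ω => hdnonneg n ω
    have hkey : ∀ᵐ ω ∂μ, ∀ k : ℕ, ∃ n, d n ω < 1/(k+1) := by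
      refine hae₂ ?_
      rw [ae_all_iff]
      intro k
      have hεpos : (0:ℝ) < 1/(k+1) := by positivity
      have hkpos : (0:ℝ) < (k:ℝ)+1 := by positivity
      have hA : ν {ω | ∀ n, 1/(k+1) ≤ d n ω} = 0 := by
        have htoReal : ∀ n : ℕ,
            (ν {ω | ∀ m, 1/((k:ℝ)+1) ≤ d m ω}).toReal ≤ (1/(n+1)) * ((k:ℝ)+1) := by
          intro n
          have hsub : {ω | ∀ m, 1/((k:ℝ)+1) ≤ d m ω} ⊆ {ω | 1/((k:ℝ)+1) ≤ d n ω} :=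
            fun ω hω => hω n
          have hmono : (ν {ω | ∀ m, 1/((k:ℝ)+1) ≤ d m ω}).toReal
              ≤ (ν {ω | 1/((k:ℝ)+1) ≤ d n ω}).toReal :=
            ENNReal.toReal_mono (measure_ne_top ν _) (measure_mono hsub)
          have hmark := mul_meas_ge_le_integral_of_nonneg
            (Filter.Eventually.of_forall fun ω => hdnonneg n ω) (hdint n) (1/((k:ℝ)+1))
          have hsm := hdsmall n
          have hcc : 1/((k:ℝ)+1) * ((k:ℝ)+1) = 1 := one_div_mul_cancel hkpos.ne'
          have hstep : (ν {ω | 1/((k:ℝ)+1) ≤ d n ω}).toReal < 1/((n:ℝ)+1) * ((k:ℝ)+1) := by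
            calc (ν {ω | 1/((k:ℝ)+1) ≤ d n ω}).toReal
                = 1/((k:ℝ)+1) * (ν {ω | 1/((k:ℝ)+1) ≤ d n ω}).toReal * ((k:ℝ)+1) := by
                  rw [mul_comm (1/((k:ℝ)+1)), mul_assoc, hcc, mul_one]
              _ ≤ (∫ ω, d n ω ∂ν) * ((k:ℝ)+1) :=
                  mul_le_mul_of_nonneg_right hmark hkpos.le
              _ < 1/((n:ℝ)+1) * ((k:ℝ)+1) := mul_lt_mul_of_pos_right hsm hkpos
          exact hmono.trans hstep.le
        have h0 : (ν {ω | ∀ m, 1/((k:ℝ)+1) ≤ d m ω}).toReal = 0 := by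
          by_contra h
          have hpos : 0 < (ν {ω | ∀ m, 1/((k:ℝ)+1) ≤ d m ω}).toReal :=
            lt_of_le_of_ne ENNReal.toReal_nonneg (Ne.symm h)
          obtain ⟨n, hn⟩ := exists_nat_one_div_lt
            (show (0:ℝ) < (ν {ω | ∀ m, 1/((k:ℝ)+1) ≤ d m ω}).toReal / ((k:ℝ)+1) by positivity)
          have h2 := htoReal n
          rw [lt_div_iff₀ hkpos] at hn
          linarith
        have := (ENNReal.toReal_eq_zero_iff _).1 h0
        exact this.resolve_right (measure_ne_top ν _)
      rw [ae_iff]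
      simp only [not_exists, not_lt]
      exact hA
    have h1 : ∀ᵐ ω ∂μ, ∀ n, (g n) ω ≤ b ω := by
      rw [ae_all_iff]
      intro n
      exact MeasureTheory.AEEqFun.coeFn_le.2 (hgb n)
    rw [← MeasureTheory.AEEqFun.coeFn_le]
    filter_upwards [h1, hkey] with ω hω1 hω2
    by_contra hcon
    push_neg at hcon
    have hδ : 0 < Real.arctan (s ω) - Real.arctan (b ω) :=
      sub_pos.2 (Real.arctan_strictMono hcon)
    obtain ⟨k, hk⟩ := exists_nat_one_div_lt hδ
    obtain ⟨n, hn⟩ := hω2 k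
    have hmax : max ((g n) ω) (s ω) = s ω := max_eq_right ((hω1 n).trans hcon.le)
    have hd2 : Real.arctan (s ω) - Real.arctan (b ω) ≤ d n ω := by
      rw [hddef]
      simp only [hmax]
      exact sub_le_sub_left (Real.arctan_strictMono.monotone (hω1 n)) _
    exact absurd hn (not_lt.2 (hk.le.trans hd2))

open MeasureTheory in
private theorem stmt17_forward {Ω : Type*} [MeasurableSpace Ω] (μ : Measure Ω)
    (hsemi : ∀ E : Set Ω, MeasurableSet E → μ E = ∞ →
      ∃ F : Set Ω, MeasurableSet F ∧ F ⊆ E ∧ 0 < μ F ∧ μ F < ∞)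
    (hcsp : CountableSupProperty (Ω →ₘ[μ] ℝ)) : SigmaFinite μ := by
  classical
  set S : Set (Ω →ₘ[μ] ℝ) := {f | ∃ E : Set Ω, MeasurableSet E ∧ μ E < ∞ ∧
      ⇑f =ᵐ[μ] Set.indicator E (fun _ => (1:ℝ))} with hSdef
  have hub : IsLUB S 1 := by
    constructor
    · rintro f ⟨E, hE, hfin, hf⟩
      rw [← MeasureTheory.AEEqFun.coeFn_le]
      filter_upwards [hf, MeasureTheory.AEEqFun.coeFn_one (β := ℝ)] with ω h1 h2
      rw [h1, h2]
      by_cases hω : ω ∈ E <;> simp [Set.indicator, hω]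
    · intro b hb
      set E := {ω | b ω < 1} with hEdef
      have hEm : MeasurableSet E := measurableSet_lt b.measurable measurable_const
      have hE0 : μ E = 0 := by
        by_contra h0
        obtain ⟨F, hFm, hFE, hFpos, hFfin⟩ :
            ∃ Fs : Set Ω, MeasurableSet Fs ∧ Fs ⊆ E ∧ 0 < μ Fs ∧ μ Fs < ∞ := by
          rcases eq_top_or_lt_top (μ E) with htop | hlt
          · exact hsemi E hEm htop
          · exact ⟨E, hEm, subset_rfl, pos_iff_ne_zero.2 h0, hlt⟩
        have hmem : (AEEqFun.mk (Set.indicator F fun _ => (1:ℝ))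
            ((measurable_const.indicator hFm).aestronglyMeasurable) : Ω →ₘ[μ] ℝ) ∈ S :=
          ⟨F, hFm, hFfin, MeasureTheory.AEEqFun.coeFn_mk _ _⟩
        have hle := hb hmem
        rw [← MeasureTheory.AEEqFun.coeFn_le] at hle
        have hae : ∀ᵐ ω ∂μ, Set.indicator F (fun _ => (1:ℝ)) ω ≤ b ω := by
          filter_upwards [hle, MeasureTheory.AEEqFun.coeFn_mk
            (Set.indicator F fun _ => (1:ℝ))
            ((measurable_const.indicator hFm).aestronglyMeasurable)] with ω hx hy
          rw [← hy]; exact hx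
        have hFnull : μ F = 0 := by
          have hsub : F ⊆ {ω | ¬ (Set.indicator F (fun _ => (1:ℝ)) ω ≤ b ω)} := by
            intro ω hω
            have hx : Set.indicator F (fun _ => (1:ℝ)) ω = 1 := Set.indicator_of_mem hω _
            have hy : b ω < 1 := hFE hω
            simp only [Set.mem_setOf_eq, hx, not_le]
            exact hy
          exact measure_mono_null hsub (ae_iff.1 hae)
        exact absurd hFnull hFpos.ne'
      rw [← MeasureTheory.AEEqFun.coeFn_le]
      have hcompl : ∀ᵐ ω ∂μ, ω ∉ E := measure_eq_zero_iff_ae_notMem.1 hE0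
      filter_upwards [hcompl, MeasureTheory.AEEqFun.coeFn_one (β := ℝ)] with ω h1 h2
      rw [h2]
      have : ¬ b ω < 1 := h1
      simpa using not_lt.1 this
  have hSne : S.Nonempty := by
    refine ⟨0, ∅, MeasurableSet.empty, by simp, ?_⟩
    filter_upwards [MeasureTheory.AEEqFun.coeFn_zero (β := ℝ)] with ω h
    simp [h]
  obtain ⟨C, hCS, hCc, hClub⟩ := hcsp S 1 hSne hub
  have hmem : ∀ f ∈ C, ∃ E, MeasurableSet E ∧ μ E < ∞ ∧
      ⇑f =ᵐ[μ] Set.indicator E (fun _ => (1:ℝ)) := fun f hf => hCS hf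
  choose E hEm hEfin hEae using hmem
  haveI : Countable ↥C := hCc.to_subtype
  set U := ⋃ (f : ↥C), E f.1 f.2 with hUdef
  have hUm : MeasurableSet U := MeasurableSet.iUnion fun f => hEm f.1 f.2
  have hUb : (1 : Ω →ₘ[μ] ℝ) ≤ AEEqFun.mk (Set.indicator U fun _ => (1:ℝ))
      ((measurable_const.indicator hUm).aestronglyMeasurable) := by
    refine hClub.2 ?_
    rintro f hf
    rw [← MeasureTheory.AEEqFun.coeFn_le]
    filter_upwards [hEae f hf, MeasureTheory.AEEqFun.coeFn_mk
      (Set.indicator U fun _ => (1:ℝ))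
      ((measurable_const.indicator hUm).aestronglyMeasurable)] with ω h1 h2
    rw [h1, h2]
    refine Set.indicator_le_indicator_of_subset ?_ (fun _ => zero_le_one) ω
    exact Set.subset_iUnion (fun f : ↥C => E f.1 f.2) (⟨f, hf⟩ : ↥C)
  have hUc : μ Uᶜ = 0 := by
    rw [← MeasureTheory.AEEqFun.coeFn_le] at hUb
    have hmemU : ∀ᵐ ω ∂μ, ω ∈ U := by
      filter_upwards [hUb, MeasureTheory.AEEqFun.coeFn_one (β := ℝ),
        MeasureTheory.AEEqFun.coeFn_mk (Set.indicator U fun _ => (1:ℝ))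
        ((measurable_const.indicator hUm).aestronglyMeasurable)] with ω h1 h2 h3
      rw [h2, h3] at h1
      by_contra hω
      rw [Set.indicator_of_notMem hω] at h1
      simp only [Pi.one_apply] at h1
      linarith
    have := ae_iff.1 hmemU
    simpa [Set.compl_def] using this
  refine Measure.sigmaFinite_of_countable (S := insert Uᶜ (Set.range fun f : ↥C => E f.1 f.2))
    ((Set.countable_range _).insert _) ?_ ?_
  · rintro s hs
    rcases Set.mem_insert_iff.1 hs with rfl | ⟨f, rfl⟩
    · simp [hUc]
    · exact hEfin f.1 f.2
  · rw [Set.sUnion_insert, Set.sUnion_range]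
    exact Set.compl_union_self U

/-- for a semi-finite measure, `L₀(μ)` has the countable sup property iff
`μ` is σ-finite. -/
theorem stmt17 {Ω : Type*} [MeasurableSpace Ω] (μ : MeasureTheory.Measure Ω)
    (hsemi : ∀ E : Set Ω, MeasurableSet E → μ E = ∞ →
      ∃ F : Set Ω, MeasurableSet F ∧ F ⊆ E ∧ 0 < μ F ∧ μ F < ∞) :
    CountableSupProperty (Ω →ₘ[μ] ℝ) ↔ MeasureTheory.SigmaFinite μ := by
  constructor
  · exact stmt17_forward μ hsemi
  · intro h
    exact @stmt17_backward Ω _ μ h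
end
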